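/- arXiv:1109.1963 — 5 statements merged into one kernel-verified Lean document; each statement's English description precedes it below -/
import Mathlib

section
/- Every velocity lies in the velocity polytope: let (G, δ) be a displacement graph in dimension d. If f is a trajectory whose velocity u = lim_{n→∞} (1/n)·∑_{k=1}^n δ(f(k)) exists in ℝ^d, then u lies in the convex hull in ℝ^d of the set of basic velocities of (G, δ). -/
/-- A path in a directed multigraph with source map `s` and target map `t`:
a nonempty list of edges `e₁ … e_n` with `t eᵢ = s eᵢ₊₁`. -/
def IsPathList {V E : Type*} (s t : E → V) (p : List E) : Prop :=
  p ≠ [] ∧ p.Chain' (fun e f => t e = s f)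

/-- A cycle: a path `e₁ … e_n` with `s e₁ = t e_n` whose vertices
`s e₁, …, s e_n` are pairwise distinct. -/
def IsCycleList {V E : Type*} (s t : E → V) (p : List E) : Prop :=
  ∃ h : p ≠ [], p.Chain' (fun e f => t e = s f) ∧
    s (p.head h) = t (p.getLast h) ∧ (p.map s).Nodup

/-- Regard a vector of `ℤ^d` as a point of Euclidean space `ℝ^d`. -/
def toR {d : ℕ} (x : Fin d → ℤ) : EuclideanSpace ℝ (Fin d) := WithLp.toLp 2 (fun i => (x i : ℝ))

/-- A trajectory: a sequence of edges with `s (f (n+1)) = t (f n)`. -/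
def IsTrajectory {V E : Type*} (s t : E → V) (f : ℕ → E) : Prop :=
  ∀ n : ℕ, s (f (n + 1)) = t (f n)

/-- `u` is the velocity of the trajectory `f`:
`(1/n) · ∑_{k=1}^n δ(f k) → u` as `n → ∞`. -/
def HasVelocity {d : ℕ} {E : Type*} (δ : E → Fin d → ℤ) (f : ℕ → E)
    (u : EuclideanSpace ℝ (Fin d)) : Prop :=
  Filter.Tendsto (fun n : ℕ => (n : ℝ)⁻¹ • ∑ k ∈ Finset.Icc 1 n, toR (δ (f k)))
    Filter.atTop (nhds u)

/-- The set of basic velocities `δ(c)/|c|` of cycles `c`. -/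
def basicVelocities {d : ℕ} {V E : Type*} (s t : E → V) (δ : E → Fin d → ℤ) :
    Set (EuclideanSpace ℝ (Fin d)) :=
  {u | ∃ c : List E, IsCycleList s t c ∧ u = (c.length : ℝ)⁻¹ • toR (c.map δ).sum}

/-- The set of all velocities of trajectories. -/
def velocitySet {d : ℕ} {V E : Type*} (s t : E → V) (δ : E → Fin d → ℤ) :
    Set (EuclideanSpace ℝ (Fin d)) :=
  {u | ∃ f : ℕ → E, IsTrajectory s t f ∧ HasVelocity δ f u}

/-- `p` is a path from vertex `a` to vertex `b`. -/
def PathFrom {V E : Type*} (s t : E → V) (a b : V) (p : List E) : Prop :=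
  ∃ h : p ≠ [], p.Chain' (fun e f => t e = s f) ∧ s (p.head h) = a ∧ t (p.getLast h) = b

/-- Strong connectivity: any vertex can be reached from any vertex by a path. -/
def StronglyConnected {V E : Type*} (s t : E → V) : Prop :=
  ∀ v w : V, ∃ p : List E, PathFrom s t v w p

private lemma getElem_idx_congr {α : Type*} (l : List α) {i j : ℕ} (h : i = j)
    (hi : i < l.length) : l[i]'hi = l[j]'(h ▸ hi) := by subst h; rfl

lemma exists_cycle_split {V E : Type*} (s t : E → V) (p : List E)
    (hc : p.Chain' (fun e f => t e = s f)) (hnd : ¬ (p.map s).Nodup) :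
    ∃ c p' : List E, IsCycleList s t c ∧ p'.Chain' (fun e f => t e = s f) ∧
      p.Perm (c ++ p') ∧ p'.length < p.length := by
  classical
  have hex : ∃ n, ¬ ((p.take n).map s).Nodup := ⟨p.length, by simpa using hnd⟩
  have hj0le : Nat.find hex ≤ p.length := Nat.find_min' hex (by simpa using hnd)
  have hj0pos : 1 ≤ Nat.find hex := by
    rcases Nat.eq_zero_or_pos (Nat.find hex) with h | h
    · exfalso; have := Nat.find_spec hex; rw [h] at this; simp at this
    · exact h
  obtain ⟨j, hj⟩ : ∃ j, Nat.find hex = j + 1 := ⟨Nat.find hex - 1, by omega⟩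
  have hjlt : j < p.length := by omega
  have hndtake : ((p.take j).map s).Nodup := by
    by_contra h
    have := Nat.find_min' hex h; omega
  have hnottake : ¬ ((p.take (j+1)).map s).Nodup := hj ▸ Nat.find_spec hex
  have htakesucc : p.take (j+1) = p.take j ++ [p[j]] := by
    rw [List.take_succ]; simp [hjlt]
  rw [htakesucc, List.map_append] at hnottake
  have hmem : s p[j] ∈ (p.take j).map s := by
    by_contra h
    apply hnottake
    rw [List.nodup_append]
    exact ⟨hndtake, List.nodup_singleton _, fun a ha b hb hab => h (by simp at hb; subst hb; rw [← hab]; exact ha)⟩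
  obtain ⟨e, he, hse⟩ := List.mem_map.mp hmem
  obtain ⟨i, hi, hei⟩ := List.mem_iff_getElem.mp he
  have hij : i < j := by simp [List.length_take] at hi; omega
  have hilt : i < p.length := by omega
  have hpi : p[i] = e := by rw [← hei]; simp
  -- the cycle
  have hclen : ((p.take j).drop i).length = j - i := by
    simp [List.length_drop, List.length_take]; omega
  have hcne : (p.take j).drop i ≠ [] := by
    intro h; rw [h] at hclen; simp at hclen; omega
  have hcinfix : (p.take j).drop i <:+: p :=
    ((p.take j).drop_suffix i).isInfix.trans (p.take_prefix j).isInfix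
  have hcchain : ((p.take j).drop i).Chain' (fun e f => t e = s f) := hc.infix hcinfix
  have hchead : ((p.take j).drop i).head hcne = p[i] := by
    rw [List.head_eq_getElem]; simp
  have hj1 : j - 1 < p.length := by omega
  have hclast : ((p.take j).drop i).getLast hcne = p[j-1]'hj1 := by
    rw [List.getLast_eq_getElem]
    simp only [List.getElem_drop, List.getElem_take]
    exact getElem_idx_congr p (by omega) _
  have hchainget := List.isChain_iff_getElem.mp hc
  have hclose : s (((p.take j).drop i).head hcne) = t (((p.take j).drop i).getLast hcne) := by
    rw [hchead, hclast, hpi, hse]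
    have h2 := hchainget (j-1) (by omega)
    rw [h2]
    exact congrArg s (getElem_idx_congr p (by omega) hjlt)
  have hcnodup : (((p.take j).drop i).map s).Nodup := by
    have hsub : List.Sublist (((p.take j).drop i).map s) ((p.take j).map s) :=
      ((p.take j).drop_suffix i).sublist.map s
    exact hndtake.sublist hsub
  -- the remainder
  refine ⟨(p.take j).drop i, p.take i ++ p.drop j, ⟨hcne, hcchain, hclose, hcnodup⟩, ?_, ?_, ?_⟩
  · rw [List.Chain', List.isChain_append]
    refine ⟨hc.prefix (p.take_prefix i), hc.suffix (p.drop_suffix j), ?_⟩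
    intro x hx y hy
    have hi1 : 0 < i := by
      by_contra h
      have : i = 0 := by omega
      subst this
      simp at hx
    have hi2 : i - 1 < p.length := by omega
    have hxval : x = p[i-1]'hi2 := by
      have hlen' : (p.take i).length = i := by
        rw [List.length_take]; omega
      have hl : (p.take i).getLast? = some (p[i-1]'hi2) := by
        rw [List.getLast?_eq_getElem?, hlen', List.getElem?_take_of_lt (by omega),
          List.getElem?_eq_getElem (by omega)]
      rw [hl, Option.mem_some_iff] at hx; exact hx.symm
    have hyval : y = p[j] := by
      have hh : (p.drop j).head? = some p[j] := by
        rw [List.head?_drop, List.getElem?_eq_getElem hjlt]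
      rw [hh, Option.mem_some_iff] at hy; exact hy.symm
    subst hxval hyval
    have h2 := hchainget (i-1) (by omega)
    rw [h2, ← hse, ← hpi]
    exact (congrArg s (getElem_idx_congr p (show i - 1 + 1 = i by omega) (by omega)))
  · have hsplit : p = p.take i ++ ((p.take j).drop i ++ p.drop j) := by
      have h1 : p.take i = (p.take j).take i := by
        rw [List.take_take, Nat.min_eq_left (by omega)]
      rw [← List.append_assoc, h1, List.take_append_drop, List.take_append_drop]
    conv_lhs => rw [hsplit]
    exact List.perm_append_comm_assoc _ _ _
  · rw [List.length_append, List.length_take, List.length_drop]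
    omega

lemma cycle_decomp {V E : Type*} (s t : E → V) :
    ∀ (n : ℕ) (p : List E), p.length ≤ n → p.Chain' (fun e f => t e = s f) →
    ∃ (cs : List (List E)) (q : List E), (∀ c ∈ cs, IsCycleList s t c) ∧
      (q.map s).Nodup ∧ p.Perm (cs.flatten ++ q) := by
  intro n
  induction n with
  | zero =>
    intro p hp _
    have : p = [] := List.length_eq_zero_iff.mp (by omega)
    exact ⟨[], p, by simp, by simp [this], by simp⟩
  | succ n ih =>
    intro p hp hc
    by_cases hnd : (p.map s).Nodup
    · exact ⟨[], p, by simp, hnd, by simp⟩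
    · obtain ⟨c, p', hcyc, hc', hperm, hlt⟩ := exists_cycle_split s t p hc hnd
      obtain ⟨cs, q, h1, h2, h3⟩ := ih p' (by omega) hc'
      refine ⟨c :: cs, q, ?_, h2, ?_⟩
      · intro c' hmemc
        rcases List.mem_cons.mp hmemc with rfl | hc''
        · exact hcyc
        · exact h1 _ hc''
      · refine hperm.trans ?_
        rw [List.flatten_cons, List.append_assoc]
        exact h3.append_left c

noncomputable def toRHom (d : ℕ) : (Fin d → ℤ) →+ EuclideanSpace ℝ (Fin d) where
  toFun := toR
  map_zero' := by ext i; simp [toR]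
  map_add' := fun x y => by ext i; simp [toR]

lemma norm_toR_list_sum_le {d : ℕ} {E : Type*} (δ : E → Fin d → ℤ) (M : ℝ)
    (hM : ∀ e, ‖toR (δ e)‖ ≤ M) : ∀ l : List E, ‖toR ((l.map δ).sum)‖ ≤ l.length * M := by
  intro l
  induction l with
  | nil => simp [show toR (d := d) 0 = 0 from (toRHom d).map_zero]
  | cons a l ih =>
    have : toR ((List.map δ (a :: l)).sum) = toR (δ a) + toR ((l.map δ).sum) := by
      simp only [List.map_cons, List.sum_cons]
      exact (toRHom d).map_add _ _
    rw [this]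
    calc ‖toR (δ a) + toR ((l.map δ).sum)‖ ≤ ‖toR (δ a)‖ + ‖toR ((l.map δ).sum)‖ :=
          norm_add_le _ _
      _ ≤ M + l.length * M := add_le_add (hM a) ih
      _ = (a :: l).length * M := by simp; ring

lemma list_range_map_sum {M : Type*} [AddCommMonoid M] (n : ℕ) (g : ℕ → M) :
    ((List.range n).map g).sum = ∑ i ∈ Finset.range n, g i := by
  induction n with
  | zero => simp
  | succ n ih => rw [List.range_succ, Finset.sum_range_succ, List.map_append]; simp [ih]

lemma finite_basicVelocities {d : ℕ} {V E : Type*} [Fintype V] [Fintype E]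
    (s t : E → V) (δ : E → Fin d → ℤ) : (basicVelocities s t δ).Finite := by
  have h1 : {l : List E | l.length ≤ Fintype.card V}.Finite := List.finite_length_le E _
  apply Set.Finite.subset (h1.image (fun c => (c.length : ℝ)⁻¹ • toR (c.map δ).sum))
  rintro u ⟨c, ⟨hne, hchain, hclose, hnodup⟩, rfl⟩
  refine ⟨c, ?_, rfl⟩
  have := hnodup.length_le_card
  simpa using this

/-- Every velocity lies in the velocity polytope: if a trajectory `f` has
velocity `u`, then `u` lies in the convex hull of the basic velocities. -/
theorem stmt9 {d : ℕ} (hd : 1 ≤ d) {V E : Type*} [Fintype V] [Nonempty V] [Fintype E]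
    (s t : E → V) (δ : E → Fin d → ℤ)
    (f : ℕ → E) (hf : IsTrajectory s t f)
    (u : EuclideanSpace ℝ (Fin d)) (hu : HasVelocity δ f u) :
    u ∈ convexHull ℝ (basicVelocities s t δ) := by
  classical
  have hE : Nonempty E := ⟨f 0⟩
  set M : ℝ := ∑ e : E, ‖toR (δ e)‖ with hMdef
  have hM : ∀ e, ‖toR (δ e)‖ ≤ M := fun e =>
    Finset.single_le_sum (f := fun e' => ‖toR (δ e')‖) (fun i _ => norm_nonneg _)
      (Finset.mem_univ e)
  have hM0 : 0 ≤ M := Finset.sum_nonneg fun i _ => norm_nonneg _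
  set cV : ℕ := Fintype.card V with hcVdef
  set K := convexHull ℝ (basicVelocities s t δ) with hKdef
  have hKclosed : IsClosed K := (finite_basicVelocities s t δ).isClosed_convexHull ℝ
  -- main estimate
  have key : ∀ n : ℕ, cV < n → ∃ y ∈ K,
      dist ((n : ℝ)⁻¹ • ∑ k ∈ Finset.Icc 1 n, toR (δ (f k))) y ≤ 2 * cV * M / n := by
    intro n hn
    set p : List E := (List.range n).map (fun k => f (k+1)) with hpdef
    have hplen : p.length = n := by simp [hpdef]
    have hpchain : p.Chain' (fun e f' => t e = s f') := by
      rw [hpdef, List.Chain', List.isChain_map, List.isChain_iff_getElem]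
      intro i hi
      simp only [List.get_eq_getElem, List.getElem_range]
      exact (hf (i+1)).symm
    -- the sum over Icc is the sum over the path
    have hsum : ∑ k ∈ Finset.Icc 1 n, toR (δ (f k)) = toR ((p.map δ).sum) := by
      have h1 : toR ((p.map δ).sum) = ((p.map δ).map toR).sum := map_list_sum (toRHom d) _
      rw [h1, hpdef, List.map_map, List.map_map, list_range_map_sum]
      rw [← Finset.Ico_add_one_right_eq_Icc, Finset.sum_Ico_eq_sum_range]
      simp only [Nat.add_sub_cancel, Function.comp]
      exact Finset.sum_congr rfl fun i _ => by rw [Nat.add_comm 1 i]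
    obtain ⟨cs, q, hcs, hqnodup, hperm⟩ := cycle_decomp s t p.length p le_rfl hpchain
    have hq : q.length ≤ cV := by
      have h := hqnodup.length_le_card
      simpa using h
    have hlen : n = cs.flatten.length + q.length := by
      have h := hperm.length_eq
      rw [hplen, List.length_append] at h
      exact h
    set L : ℕ := cs.flatten.length with hLdef
    have hL1 : 1 ≤ L := by omega
    set A := toR ((cs.flatten.map δ).sum) with hAdef
    set B := toR ((q.map δ).sum) with hBdef
    have hsum2 : toR ((p.map δ).sum) = A + B := by
      have h : (p.map δ).sum = ((cs.flatten).map δ).sum + (q.map δ).sum := by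
        have h2 := (hperm.map δ).sum_eq
        rw [List.map_append, List.sum_append] at h2
        exact h2
      rw [h]
      exact (toRHom d).map_add _ _
    -- the candidate point
    refine ⟨(L : ℝ)⁻¹ • A, ?_, ?_⟩
    · -- membership in the convex hull
      have hcyclen : ∀ i : Fin cs.length, cs[i.1].length ≠ 0 := by
        intro i
        obtain ⟨hne, -, -, -⟩ := hcs _ (List.getElem_mem i.2)
        simpa [List.length_eq_zero_iff] using hne
      have hsumlen : ∑ i : Fin cs.length, ((cs[i.1].length : ℝ)) = (L : ℝ) := by
        have h1 : ∑ i : Fin cs.length, ((cs[i.1].length : ℝ))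
            = ((cs.map (fun c => (c.length : ℝ))).sum) :=
              Fin.sum_univ_fun_getElem cs (fun c => (c.length : ℝ))
        rw [h1, hLdef, List.length_flatten]
        rw [Nat.cast_list_sum, List.map_map]
        rfl
      have hcoe : (toR (d := d)) = ⇑(toRHom d) := rfl
      have hA2 : A = ∑ i : Fin cs.length, toR ((cs[i.1].map δ).sum) := by
        rw [hAdef, hcoe, List.map_flatten, List.sum_flatten, map_list_sum (toRHom d),
          List.map_map, List.map_map]
        exact (Fin.sum_univ_fun_getElem cs ((toRHom d) ∘ List.sum ∘ List.map δ)).symm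
      have hLpos : (0 : ℝ) < (L : ℝ) := by exact_mod_cast hL1
      have := (convex_convexHull ℝ (basicVelocities s t δ)).sum_mem
        (t := Finset.univ (α := Fin cs.length))
        (w := fun i => (cs[i.1].length : ℝ) / L)
        (z := fun i => ((cs[i.1].length : ℝ))⁻¹ • toR ((cs[i.1].map δ).sum))
        (fun i _ => by positivity)
        (by rw [← Finset.sum_div, hsumlen]; field_simp)
        (fun i _ => subset_convexHull ℝ _ ⟨cs[i.1], hcs _ (List.getElem_mem i.2), rfl⟩)
      rw [hKdef]
      convert this using 1
      rw [hA2, Finset.smul_sum]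
      refine Finset.sum_congr rfl fun i _ => ?_
      rw [smul_smul]
      congr 1
      have hne : (cs[i.1].length : ℝ) ≠ 0 := Nat.cast_ne_zero.mpr (hcyclen i)
      field_simp
    · -- the distance bound
      rw [hsum, hsum2, dist_eq_norm]
      have hnpos : (0 : ℝ) < (n : ℝ) := by exact_mod_cast (show 0 < n by omega)
      have hLpos : (0 : ℝ) < (L : ℝ) := by exact_mod_cast hL1
      have hLn : (L : ℝ) ≤ (n : ℝ) := by exact_mod_cast (by omega : L ≤ n)
      have hdiff : (n : ℝ) - (L : ℝ) ≤ (cV : ℝ) := by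
        have : n - L ≤ cV := by omega
        have h2 : ((n - L : ℕ) : ℝ) = (n : ℝ) - (L : ℝ) := by
          push_cast [Nat.cast_sub (by omega : L ≤ n)]; ring
        rw [← h2]; exact_mod_cast this
      have hsplit : (n : ℝ)⁻¹ • (A + B) - (L : ℝ)⁻¹ • A
          = ((n : ℝ)⁻¹ - (L : ℝ)⁻¹) • A + (n : ℝ)⁻¹ • B := by
        module
      rw [hsplit]
      have hAn : ‖A‖ ≤ (L : ℝ) * M := norm_toR_list_sum_le δ M hM cs.flatten
      have hBn : ‖B‖ ≤ (cV : ℝ) * M := by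
        refine le_trans (norm_toR_list_sum_le δ M hM q) ?_
        have : (q.length : ℝ) ≤ (cV : ℝ) := by exact_mod_cast hq
        exact mul_le_mul_of_nonneg_right this hM0
      calc ‖((n : ℝ)⁻¹ - (L : ℝ)⁻¹) • A + (n : ℝ)⁻¹ • B‖
          ≤ ‖((n : ℝ)⁻¹ - (L : ℝ)⁻¹) • A‖ + ‖(n : ℝ)⁻¹ • B‖ := norm_add_le _ _
        _ = ((L : ℝ)⁻¹ - (n : ℝ)⁻¹) * ‖A‖ + (n : ℝ)⁻¹ * ‖B‖ := by
            rw [norm_smul, norm_smul, Real.norm_eq_abs, Real.norm_eq_abs]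
            have hinv : (n : ℝ)⁻¹ ≤ (L : ℝ)⁻¹ := by gcongr
            rw [abs_of_nonpos (by linarith), abs_of_nonneg (by positivity)]
            ring
        _ ≤ ((L : ℝ)⁻¹ - (n : ℝ)⁻¹) * ((L : ℝ) * M) + (n : ℝ)⁻¹ * ((cV : ℝ) * M) := by
            have h1 : (0:ℝ) ≤ (L : ℝ)⁻¹ - (n : ℝ)⁻¹ := by
              have hinv : (n : ℝ)⁻¹ ≤ (L : ℝ)⁻¹ := by gcongr
              linarith
            exact add_le_add (mul_le_mul_of_nonneg_left hAn h1)
              (mul_le_mul_of_nonneg_left hBn (by positivity))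
        _ = (((n : ℝ) - L) * M) / n + ((cV : ℝ) * M) / n := by
            field_simp
        _ ≤ ((cV : ℝ) * M) / n + ((cV : ℝ) * M) / n := by
            have h3 : ((n : ℝ) - L) * M ≤ (cV : ℝ) * M := mul_le_mul_of_nonneg_right hdiff hM0
            exact add_le_add ((div_le_div_iff_of_pos_right hnpos).mpr h3) le_rfl
        _ = 2 * (cV : ℝ) * M / n := by ring
  -- conclude by closedness
  rw [hKdef] at hKclosed ⊢
  rw [← hKclosed.closure_eq]
  rw [Metric.mem_closure_iff]
  intro ε hε
  obtain ⟨N, hN⟩ := Metric.tendsto_atTop.mp hu (ε/2) (by linarith)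
  obtain ⟨n1, hn1⟩ := exists_nat_gt (4 * (cV : ℝ) * M / ε)
  set n := max (max N (cV + 1)) n1 with hndef
  have hncV : cV < n := by
    have := le_max_left (max N (cV+1)) n1
    have := le_max_right N (cV+1)
    omega
  obtain ⟨y, hyK, hy⟩ := key n hncV
  refine ⟨y, hyK, ?_⟩
  have hd1 : dist ((n : ℝ)⁻¹ • ∑ k ∈ Finset.Icc 1 n, toR (δ (f k))) u < ε / 2 :=
    hN n (by omega)
  have hd2 : 2 * (cV : ℝ) * M / n < ε / 2 := by
    have hnn1 : (n1 : ℝ) ≤ (n : ℝ) := by exact_mod_cast (by omega : n1 ≤ n)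
    have hnpos : (0 : ℝ) < n := by
      have : 0 < n := by omega
      exact_mod_cast this
    rw [div_lt_iff₀ hnpos]
    have h4 : 4 * (cV : ℝ) * M < ε * n1 := by
      rw [div_lt_iff₀ hε] at hn1
      linarith [hn1]
    have h5 : ε * n1 ≤ ε * n := mul_le_mul_of_nonneg_left hnn1 (le_of_lt hε)
    linarith
  calc dist u y ≤ dist u ((n : ℝ)⁻¹ • ∑ k ∈ Finset.Icc 1 n, toR (δ (f k))) + _ :=
        dist_triangle u _ y
    _ < ε := by
        rw [dist_comm] at hd1
        linarith [hy, hd1, hd2]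
end

section
/- Every point of the velocity polytope is realized: let (G, δ) be a displacement graph in dimension d and suppose G is strongly connected. Then for every point u in the convex hull in ℝ^d of the set of basic velocities of (G, δ), there exists a trajectory f whose velocity exists and equals u. -/
open Finset Filter List

/-! ### Auxiliary lemmas -/

lemma toR_add {d : ℕ} (x y : Fin d → ℤ) : toR (x + y) = toR x + toR y := by
  ext i; simp [toR]

lemma toR_zero {d : ℕ} : toR (0 : Fin d → ℤ) = 0 := by ext i; simp [toR]

lemma toR_list_sum {d : ℕ} (l : List (Fin d → ℤ)) : toR l.sum = (l.map toR).sum := by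
  induction l with
  | nil => simpa using toR_zero
  | cons x l ih => simp [toR_add, ih]

lemma list_sum_toList {ι M : Type*} [AddCommMonoid M] (T : Finset ι) (g : ι → M) :
    (T.toList.map g).sum = ∑ i ∈ T, g i := by
  rw [Finset.sum_eq_multiset_sum, ← Finset.coe_toList T, Multiset.map_coe, Multiset.sum_coe]

lemma PathFrom.append {V E : Type*} {s t : E → V} {a b c : V} {p q : List E}
    (hp : PathFrom s t a b p) (hq : PathFrom s t b c q) : PathFrom s t a c (p ++ q) := by
  obtain ⟨hp0, hpc, hph, hpl⟩ := hp
  obtain ⟨hq0, hqc, hqh, hql⟩ := hq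
  have hpq : p ++ q ≠ [] := by simp [hp0]
  refine ⟨hpq, ?_, ?_, ?_⟩
  · show List.IsChain _ _
    rw [List.isChain_append]
    refine ⟨hpc, hqc, ?_⟩
    intro x hx y hy
    rw [List.getLast?_eq_getLast hp0, Option.mem_some_iff] at hx
    rw [List.head?_eq_head hq0, Option.mem_some_iff] at hy
    rw [← hx, ← hy] at *
    rw [hpl, hqh]
  · rw [List.head_append]
    simp [hp0, hph]
  · rw [List.getLast_append]
    simp [hq0, hql]

lemma PathFrom.rep {V E : Type*} {s t : E → V} {a b c : V} {p m q : List E}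
    (hp : PathFrom s t a b p) (hm : PathFrom s t b b m) (hq : PathFrom s t b c q) (r : ℕ) :
    PathFrom s t a c (p ++ (List.replicate r m).flatten ++ q) := by
  induction r generalizing p with
  | zero => simpa using hp.append hq
  | succ r ih =>
      have he : p ++ (List.replicate (r+1) m).flatten ++ q
          = (p ++ m) ++ (List.replicate r m).flatten ++ q := by
        simp [List.replicate_succ, List.append_assoc]
      rw [he]
      exact ih (hp.append hm)

lemma PathFrom.flatten_loops {V E ι : Type*} {s t : E → V} {v₀ : V} (g : ι → List E)
    (hg : ∀ j, PathFrom s t v₀ v₀ (g j)) :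
    ∀ (is : List ι), is ≠ [] → PathFrom s t v₀ v₀ ((is.map g).flatten) := by
  intro is
  induction is with
  | nil => intro h; exact absurd rfl h
  | cons j rest ih =>
      intro _
      rcases eq_or_ne rest [] with h | h
      · subst h; simpa using hg j
      · have := (hg j).append (ih h)
        simpa using this

def catList {E : Type*} (B : ℕ → List E) : ℕ → List E
  | 0 => []
  | (m+1) => catList B m ++ B m

lemma catList_prefix {E : Type*} (B : ℕ → List E) {m M : ℕ} (h : m ≤ M) :
    catList B m <+: catList B M := by
  induction M with
  | zero => simp_all
  | succ M ih =>
      rcases Nat.lt_or_ge m (M+1) with h' | h'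
      · exact (ih (Nat.lt_succ_iff.mp h')).trans ⟨B M, rfl⟩
      · have : m = M + 1 := le_antisymm h h'
        subst this; exact List.prefix_rfl

lemma length_catList {E : Type*} (B : ℕ → List E) (M : ℕ) :
    (catList B M).length = ∑ m ∈ Finset.range M, (B m).length := by
  induction M with
  | zero => simp [catList]
  | succ M ih => simp [catList, ih, Finset.sum_range_succ]

lemma length_catList_ge {E : Type*} (B : ℕ → List E) (hB : ∀ m, B m ≠ []) (M : ℕ) :
    M ≤ (catList B M).length := by
  rw [length_catList]
  calc M = ∑ _m ∈ Finset.range M, 1 := by simp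
  _ ≤ _ := Finset.sum_le_sum fun m _ => List.length_pos_iff.mpr (hB m)

lemma map_sum_catList {E X : Type*} [AddCommMonoid X] (B : ℕ → List E) (g : E → X) (M : ℕ) :
    ((catList B M).map g).sum = ∑ m ∈ Finset.range M, ((B m).map g).sum := by
  induction M with
  | zero => simp [catList]
  | succ M ih => simp [catList, ih, Finset.sum_range_succ]

lemma catList_path {V E : Type*} {s t : E → V} {v₀ : V} (B : ℕ → List E)
    (hB : ∀ m, PathFrom s t v₀ v₀ (B m)) (M : ℕ) :
    PathFrom s t v₀ v₀ (catList B (M+1)) := by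
  induction M with
  | zero => simpa [catList] using hB 0
  | succ M ih =>
      have : catList B (M+2) = catList B (M+1) ++ B (M+1) := rfl
      rw [this]
      exact ih.append (hB (M+1))

lemma sum_range_length_map {α X : Type*} [AddCommMonoid X] (l : List α) (g : α → X) (f : ℕ → α)
    (hf : ∀ k, (h : k < l.length) → f k = l[k]) :
    ∑ k ∈ Finset.range l.length, g (f k) = (l.map g).sum := by
  induction l generalizing f with
  | nil => simp
  | cons a l ih =>
      have h0 : f 0 = a := hf 0 (by simp)
      rw [List.length_cons, Finset.sum_range_succ', h0]
      simp only [List.map_cons, List.sum_cons]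
      rw [add_comm (g a)]
      congr 1
      exact ih (fun k => f (k+1)) (fun k h => hf (k+1) (by simpa using Nat.succ_lt_succ h))
lemma cesaro_subseq {X : Type*} [NormedAddCommGroup X] [NormedSpace ℝ X]
    (a : ℕ → X) (C : ℝ) (hC : ∀ k, ‖a k‖ ≤ C) (N : ℕ → ℕ) (hmono : StrictMono N)
    (u : X)
    (hcheck : Tendsto (fun m => ((N m : ℝ))⁻¹ • ∑ k ∈ Finset.range (N m), a k)
      atTop (nhds u))
    (hratio : Tendsto (fun m => ((N (m+1) : ℝ)) / (N m)) atTop (nhds 1)) :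
    Tendsto (fun n : ℕ => ((n : ℝ))⁻¹ • ∑ k ∈ Finset.range n, a k) atTop (nhds u) := by
  set S : ℕ → X := fun n => ∑ k ∈ Finset.range n, a k with hS
  have hC0 : 0 ≤ C := (norm_nonneg (a 0)).trans (hC 0)
  have hSd : ∀ m n : ℕ, m ≤ n → ‖S n - S m‖ ≤ ((n : ℝ) - m) * C := by
    intro m n h
    have he : S n - S m = ∑ k ∈ Finset.Ico m n, a k := (Finset.sum_Ico_eq_sub _ h).symm
    rw [he]
    calc ‖∑ k ∈ Finset.Ico m n, a k‖ ≤ ∑ _k ∈ Finset.Ico m n, C :=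
          norm_sum_le_of_le _ fun k _ => hC k
    _ = ((n : ℝ) - m) * C := by
          rw [Finset.sum_const, Nat.card_Ico, nsmul_eq_mul, Nat.cast_sub h]
  have hSb : ∀ n : ℕ, ‖S n‖ ≤ (n : ℝ) * C := by
    intro n
    have := hSd 0 n (Nat.zero_le n)
    simpa [hS] using this
  have key : ∀ m n : ℕ, 0 < N m → N m ≤ n → n < N (m+1) →
      ‖(n : ℝ)⁻¹ • S n - u‖ ≤
        ‖((N m : ℝ))⁻¹ • S (N m) - u‖ + 2 * C * ((N (m+1) : ℝ) / (N m) - 1) := by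
    intro m n h0 h1 h2
    set nm : ℝ := (N m : ℝ) with hnm
    set np : ℝ := (N (m+1) : ℝ) with hnp
    set nr : ℝ := (n : ℝ) with hnr
    have h0' : (0:ℝ) < nm := by rw [hnm]; exact_mod_cast h0
    have h1' : nm ≤ nr := by rw [hnm, hnr]; exact_mod_cast h1
    have h2' : nr < np := by rw [hnr, hnp]; exact_mod_cast h2
    have hnr0 : (0:ℝ) < nr := lt_of_lt_of_le h0' h1'
    have hdec : (nr)⁻¹ • S n - u =
        (nm⁻¹ • S (N m) - u) + (nr⁻¹ • (S n - S (N m))) + ((nr⁻¹ - nm⁻¹) • S (N m)) := by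
      rw [smul_sub, sub_smul]; abel
    have hbound : ‖(nr)⁻¹ • S n - u‖ ≤ ‖nm⁻¹ • S (N m) - u‖ +
        ‖nr⁻¹ • (S n - S (N m))‖ + ‖(nr⁻¹ - nm⁻¹) • S (N m)‖ := by
      rw [hdec]; exact norm_add₃_le
    have hcommon : C * ((nr - nm) / nr) ≤ C * ((np - nm) / nm) := by
      gcongr <;> linarith
    have ht1 : ‖nr⁻¹ • (S n - S (N m))‖ ≤ C * ((nr - nm) / nr) := by
      rw [norm_smul, Real.norm_eq_abs, abs_of_pos (by positivity)]
      calc nr⁻¹ * ‖S n - S (N m)‖ ≤ nr⁻¹ * ((nr - nm) * C) := by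
            apply mul_le_mul_of_nonneg_left (hSd _ _ h1) (by positivity)
      _ = C * ((nr - nm) / nr) := by field_simp
    have ht2 : ‖(nr⁻¹ - nm⁻¹) • S (N m)‖ ≤ C * ((nr - nm) / nr) := by
      rw [norm_smul, Real.norm_eq_abs]
      have hle : nr⁻¹ ≤ nm⁻¹ := by
        apply inv_anti₀ h0' h1'
      rw [abs_of_nonpos (by linarith)]
      calc -(nr⁻¹ - nm⁻¹) * ‖S (N m)‖ ≤ (nm⁻¹ - nr⁻¹) * (nm * C) := by
            rw [neg_sub]
            exact mul_le_mul_of_nonneg_left (hSb _) (by linarith)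
      _ = C * ((nr - nm) / nr) := by field_simp
    have hfin : C * ((np - nm) / nm) = C * (np / nm - 1) := by
      rw [sub_div, div_self (ne_of_gt h0')]
    calc ‖(nr)⁻¹ • S n - u‖ ≤ ‖nm⁻¹ • S (N m) - u‖ +
        ‖nr⁻¹ • (S n - S (N m))‖ + ‖(nr⁻¹ - nm⁻¹) • S (N m)‖ := hbound
    _ ≤ ‖nm⁻¹ • S (N m) - u‖ + C * ((np - nm) / nm) + C * ((np - nm) / nm) := by
        have := ht1.trans hcommon
        have := ht2.trans hcommon
        linarith
    _ = ‖nm⁻¹ • S (N m) - u‖ + 2 * C * (np / nm - 1) := by rw [hfin]; ring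
  rw [NormedAddCommGroup.tendsto_atTop]
  intro ε hε
  have h1 : ∀ᶠ m in atTop, ‖(N m : ℝ)⁻¹ • S (N m) - u‖ < ε/2 :=
    Filter.Tendsto.eventually_lt_const (half_pos hε)
      (tendsto_iff_norm_sub_tendsto_zero.mp hcheck)
  have h2 : ∀ᶠ m in atTop, 2*C*((N (m+1) : ℝ)/(N m) - 1) < ε/2 := by
    have h0 : Tendsto (fun m => 2*C*((N (m+1) : ℝ)/(N m) - 1)) atTop (nhds 0) := by
      have := (hratio.sub_const 1).const_mul (2*C)
      simpa using this
    exact Filter.Tendsto.eventually_lt_const (half_pos hε) h0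
  obtain ⟨M₁, hM₁⟩ := eventually_atTop.mp (h1.and h2)
  set M₀ := max M₁ 1 with hM₀def
  refine ⟨N M₀, fun n hn => ?_⟩
  have hM₀n : M₀ ≤ n := le_trans hmono.le_apply hn
  set m := Nat.findGreatest (fun m => N m ≤ n) n with hmdef
  have hPm : N m ≤ n := Nat.findGreatest_spec (P := fun m => N m ≤ n) hM₀n hn
  have hm₀ : M₀ ≤ m := Nat.le_findGreatest (P := fun m => N m ≤ n) hM₀n hn
  have hm2 : n < N (m+1) := by
    by_contra h
    push_neg at h
    exact Nat.findGreatest_is_greatest (P := fun m => N m ≤ n) (hmdef ▸ Nat.lt_succ_self m)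
      (le_trans hmono.le_apply h) h
  have h0m : 0 < N m := by
    have h1m : 1 ≤ m := le_trans (le_max_right _ _) hm₀
    calc 0 < 1 := one_pos
    _ ≤ m := h1m
    _ ≤ N m := hmono.le_apply
  have hkey := key m n h0m hPm hm2
  have hM := hM₁ m (le_trans (le_max_left _ _) hm₀)
  calc ‖(n : ℝ)⁻¹ • S n - u‖ ≤ _ := hkey
  _ < ε/2 + ε/2 := by exact add_lt_add hM.1 hM.2
  _ = ε := add_halves ε
lemma hasVelocity_of_range {d : ℕ} {E : Type*} (δ : E → Fin d → ℤ) (f : ℕ → E)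
    (u : EuclideanSpace ℝ (Fin d))
    (h : Tendsto (fun n : ℕ => (n : ℝ)⁻¹ • ∑ k ∈ Finset.range n, toR (δ (f k)))
      atTop (nhds u)) : HasVelocity δ f u := by
  unfold HasVelocity
  have hIcc : ∀ n : ℕ, ∑ k ∈ Finset.Icc 1 n, toR (δ (f k)) =
      (∑ k ∈ Finset.range (n+1), toR (δ (f k))) - toR (δ (f 0)) := by
    intro n
    rw [← Finset.Ico_add_one_right_eq_Icc, Finset.sum_Ico_eq_sub _ (by omega : 1 ≤ n + 1)]
    simp
  have key : Tendsto (fun n : ℕ => (n : ℝ)⁻¹ • ∑ k ∈ Finset.range (n+1), toR (δ (f k)))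
      atTop (nhds u) := by
    have hcomp : Tendsto (fun n : ℕ => ((n+1 : ℕ) : ℝ)⁻¹ • ∑ k ∈ Finset.range (n+1), toR (δ (f k)))
        atTop (nhds u) := h.comp (tendsto_add_atTop_nat 1)
    have hratio : Tendsto (fun n : ℕ => (n : ℝ)⁻¹ * ((n+1 : ℕ) : ℝ)) atTop (nhds 1) := by
      have h1 : Tendsto (fun n : ℕ => 1 + (n : ℝ)⁻¹) atTop (nhds 1) := by
        have h2 : Tendsto (fun n : ℕ => (n : ℝ)⁻¹) atTop (nhds 0) :=
          tendsto_inv_atTop_zero.comp tendsto_natCast_atTop_atTop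
        simpa using (tendsto_const_nhds (x := (1:ℝ)) (f := atTop (α := ℕ))).add h2
      apply h1.congr'
      filter_upwards [eventually_gt_atTop 0] with n hn
      have : (n : ℝ) ≠ 0 := Nat.cast_ne_zero.mpr hn.ne'
      push_cast
      field_simp
    have := hratio.smul hcomp
    rw [one_smul] at this
    apply this.congr'
    filter_upwards [eventually_gt_atTop 0] with n hn
    rw [smul_smul]
    congr 1
    have hne : ((n+1 : ℕ) : ℝ) ≠ 0 := by positivity
    field_simp
  have hzero : Tendsto (fun n : ℕ => (n : ℝ)⁻¹ • toR (δ (f 0))) atTop (nhds 0) := by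
    have h2 : Tendsto (fun n : ℕ => (n : ℝ)⁻¹) atTop (nhds 0) :=
      tendsto_inv_atTop_zero.comp tendsto_natCast_atTop_atTop
    simpa using h2.smul_const (toR (δ (f 0)))
  have := key.sub hzero
  rw [sub_zero] at this
  apply this.congr
  intro n
  rw [hIcc n, smul_sub]

set_option maxHeartbeats 1000000 in
/-- Every point of the velocity polytope is realized: if `G` is strongly
connected, then every point of the convex hull of the basic velocities is the
velocity of some trajectory. -/
theorem stmt10 {d : ℕ} (hd : 1 ≤ d) {V E : Type*} [Fintype V] [Nonempty V] [Fintype E]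
    (s t : E → V) (δ : E → Fin d → ℤ) (hconn : StronglyConnected s t)
    (u : EuclideanSpace ℝ (Fin d)) (hu : u ∈ convexHull ℝ (basicVelocities s t δ)) :
    ∃ f : ℕ → E, IsTrajectory s t f ∧ HasVelocity δ f u := by
  classical
  rw [_root_.convexHull_eq] at hu
  obtain ⟨ι, T, w, z, hw0, hw1, hz, hcm⟩ := hu
  rw [Finset.centerMass_eq_of_sum_1 _ _ hw1] at hcm
  have hTne : T.Nonempty := by
    by_contra h
    rw [Finset.not_nonempty_iff_eq_empty] at h
    rw [h] at hw1
    simp at hw1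
  -- re-index by the subtype
  haveI : Nonempty {i : ι // i ∈ T} := ⟨⟨hTne.choose, hTne.choose_spec⟩⟩
  have hz' : ∀ j : {i : ι // i ∈ T}, ∃ c : List E, IsCycleList s t c ∧
      z j.1 = ((c.length : ℝ))⁻¹ • toR (c.map δ).sum := fun j => hz j.1 j.2
  choose c hcyc hzc using hz'
  have hcne : ∀ j, c j ≠ [] := fun j => (hcyc j).choose
  set σ : {i : ι // i ∈ T} → V := fun j => s ((c j).head (hcne j)) with hσ
  have hcpath : ∀ j, PathFrom s t (σ j) (σ j) (c j) := by
    intro j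
    obtain ⟨h, hch, hclose, _⟩ := hcyc j
    exact ⟨h, hch, rfl, hclose.symm⟩
  set v₀ : V := Classical.arbitrary V with hv₀
  choose p hp using fun j => hconn v₀ (σ j)
  choose q hq using fun j => hconn (σ j) v₀
  -- weights and sizes
  set w' : {i : ι // i ∈ T} → ℝ := fun j => w j.1 with hw'
  have hw'0 : ∀ j, 0 ≤ w' j := fun j => hw0 j.1 j.2
  have hw'1 : ∑ j, w' j = 1 := by
    rw [hw']; rw [Finset.sum_coe_sort T w] ; exact hw1
  have hu' : u = ∑ j, w' j • z j.1 := by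
    rw [hw']
    rw [Finset.sum_coe_sort T (fun i => w i • z i)]
    exact hcm.symm
  set Lc : {i : ι // i ∈ T} → ℕ := fun j => (c j).length with hLcdef
  have hLc : ∀ j, 1 ≤ Lc j := fun j => List.length_pos_iff.mpr (hcne j)
  set Mp : {i : ι // i ∈ T} → ℕ := fun j => ∏ k ∈ Finset.univ.erase j, Lc k with hMpdef
  set L : ℕ := ∏ j, Lc j with hLdef
  have hML : ∀ j, Mp j * Lc j = L := by
    intro j
    rw [hMpdef, hLdef, mul_comm]
    exact Finset.mul_prod_erase Finset.univ Lc (Finset.mem_univ j)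
  have hL1 : 1 ≤ L := by
    rw [hLdef]
    exact Finset.one_le_prod' fun j _ => hLc j
  -- the blocks
  set r : {i : ι // i ∈ T} → ℕ → ℕ := fun j m => ⌊w' j * m⌋₊ * Mp j with hrdef
  set loop : {i : ι // i ∈ T} → ℕ → List E :=
    fun j m => p j ++ (List.replicate (r j m) (c j)).flatten ++ q j with hloopdef
  set B : ℕ → List E :=
    fun m => ((Finset.univ : Finset {i : ι // i ∈ T}).toList.map (fun j => loop j m)).flatten
    with hBdef
  have hloopPath : ∀ j m, PathFrom s t v₀ v₀ (loop j m) :=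
    fun j m => (hp j).rep (hcpath j) (hq j) (r j m)
  have htoList : (Finset.univ : Finset {i : ι // i ∈ T}).toList ≠ [] := by
    simp only [ne_eq, Finset.toList_eq_nil]
    exact (Finset.univ_nonempty).ne_empty
  have hBpath : ∀ m, PathFrom s t v₀ v₀ (B m) :=
    fun m => PathFrom.flatten_loops _ (fun j => hloopPath j m) _ htoList
  have hBne : ∀ m, B m ≠ [] := fun m => (hBpath m).choose
  -- the trajectory
  set N : ℕ → ℕ := fun M => (catList B M).length with hNdef
  set e₀ : E := (c (Classical.arbitrary _)).head (hcne _) with he₀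
  set f : ℕ → E := fun n => (catList B (n+1)).getD n e₀ with hfdef
  have hNge : ∀ M, M ≤ N M := length_catList_ge B hBne
  have hfeq : ∀ M n, (h : n < (catList B M).length) → f n = (catList B M)[n] := by
    intro M n h
    have h1 : n < (catList B (n+1)).length := lt_of_lt_of_le (Nat.lt_succ_self n) (hNge (n+1))
    have hfd : f n = (catList B (n+1))[n] := List.getD_eq_getElem _ e₀ h1
    rcases le_total (n+1) M with hM | hM
    · exact hfd.trans ((catList_prefix B hM).getElem h1)
    · exact hfd.trans (((catList_prefix B hM).getElem h).symm)
  have htraj : IsTrajectory s t f := by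
    intro n
    have hlen2 : n + 1 < (catList B (n+1+1)).length :=
      lt_of_lt_of_le (Nat.lt_succ_self (n+1)) (hNge (n+1+1))
    have hlen1 : n < (catList B (n+1+1)).length := lt_trans (Nat.lt_succ_self n) hlen2
    obtain ⟨hne, hchain, -, -⟩ := catList_path B hBpath (n+1)
    change List.IsChain _ _ at hchain
    rw [List.isChain_iff_getElem] at hchain
    have := hchain n (by omega)
    rw [hfeq (n+1+1) n hlen1, hfeq (n+1+1) (n+1) hlen2]
    exact this.symm
  refine ⟨f, htraj, ?_⟩
  -- bookkeeping
  set g : E → EuclideanSpace ℝ (Fin d) := fun e => toR (δ e) with hgdef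
  set uc : {i : ι // i ∈ T} → EuclideanSpace ℝ (Fin d) := fun j => ((c j).map g).sum
    with hucdef
  set K : ℕ := ∑ j, ((p j).length + (q j).length) with hKdef
  set D : EuclideanSpace ℝ (Fin d) := ∑ j, (((p j).map g).sum + ((q j).map g).sum)
    with hDdef
  have hlenLoop : ∀ j m, (loop j m).length
      = ((p j).length + (q j).length) + ⌊w' j * m⌋₊ * L := by
    intro j m
    simp only [hloopdef, List.length_append, List.length_flatten, List.map_replicate,
      List.sum_replicate, smul_eq_mul, hrdef]
    rw [mul_assoc, hML j]
    ring
  have hsumLoop : ∀ j m, ((loop j m).map g).sum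
      = (((p j).map g).sum + ((q j).map g).sum) + (⌊w' j * m⌋₊ * Mp j) • uc j := by
    intro j m
    simp only [hloopdef, List.map_append, List.sum_append, List.map_flatten,
      List.map_replicate, List.sum_flatten, List.sum_replicate, hrdef, hucdef]
    abel
  have hlenB : ∀ m, (B m).length = K + (∑ j, ⌊w' j * (m:ℝ)⌋₊) * L := by
    intro m
    rw [hBdef]
    simp only [List.length_flatten, List.map_map]
    rw [list_sum_toList Finset.univ ((fun l => l.length) ∘ (fun j => loop j m))]
    simp only [Function.comp_apply]
    simp_rw [hlenLoop]
    rw [Finset.sum_add_distrib, Finset.sum_mul, hKdef]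
  have hsumB : ∀ m, ((B m).map g).sum
      = D + ∑ j, ((⌊w' j * (m:ℝ)⌋₊ * Mp j) • uc j) := by
    intro m
    rw [hBdef]
    simp only [List.map_flatten, List.map_map]
    rw [List.sum_flatten, List.map_map,
      list_sum_toList Finset.univ ((fun l => l.sum) ∘ (List.map g ∘ fun j => loop j m))]
    simp only [Function.comp_apply]
    simp_rw [hsumLoop]
    rw [Finset.sum_add_distrib, hDdef]
  have hNM : ∀ M, N M = M * K + (∑ j, ∑ m ∈ Finset.range M, ⌊w' j * (m:ℝ)⌋₊) * L := by
    intro M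
    simp only [hNdef]
    rw [length_catList]
    simp_rw [hlenB]
    rw [Finset.sum_add_distrib, Finset.sum_const, Finset.card_range, smul_eq_mul,
      ← Finset.sum_mul, Finset.sum_comm]
  have hSM : ∀ M, ((catList B M).map g).sum
      = M • D + ∑ j, (((∑ m ∈ Finset.range M, ⌊w' j * (m:ℝ)⌋₊) * Mp j) • uc j) := by
    intro M
    rw [map_sum_catList]
    simp_rw [hsumB]
    rw [Finset.sum_add_distrib, Finset.sum_const, Finset.card_range, Finset.sum_comm]
    congr 1
    refine Finset.sum_congr rfl fun j _ => ?_
    rw [← Finset.sum_smul, ← Finset.sum_mul]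
  -- real analysis
  set TT : ℕ → ℝ := fun M => ∑ m ∈ Finset.range M, (m:ℝ) with hTTdef
  have hTTeq : ∀ M : ℕ, TT M * 2 = (M:ℝ) * ((M:ℝ) - 1) := by
    intro M
    rcases Nat.eq_zero_or_pos M with h | h
    · subst h; simp [hTTdef]
    · have hgauss := Finset.sum_range_id_mul_two M
      have hc := congrArg (fun n : ℕ => (n:ℝ)) hgauss
      push_cast [Nat.cast_sub h] at hc
      simp only [hTTdef]
      push_cast
      convert hc using 2
  have hTTpos : ∀ M : ℕ, 2 ≤ M → 0 < TT M := by
    intro M hM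
    have h2 : (2:ℝ) ≤ (M:ℝ) := by exact_mod_cast hM
    nlinarith [hTTeq M]
  have hMT : Tendsto (fun M : ℕ => (M:ℝ)/TT M) atTop (nhds 0) := by
    have hlim : Tendsto (fun M : ℕ => (2:ℝ)/((M:ℝ)-1)) atTop (nhds 0) :=
      Tendsto.div_atTop tendsto_const_nhds
        (tendsto_atTop_add_const_right _ (-1) tendsto_natCast_atTop_atTop)
    apply hlim.congr'
    filter_upwards [eventually_ge_atTop 2] with M hM
    have h2 : (2:ℝ) ≤ (M:ℝ) := by exact_mod_cast hM
    have h0 : TT M ≠ 0 := ne_of_gt (hTTpos M hM)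
    have hm1 : (M:ℝ) - 1 ≠ 0 := ne_of_gt (by linarith)
    field_simp
    nlinarith [hTTeq M]
  have hWT : ∀ j, Tendsto
      (fun M : ℕ => (∑ m ∈ Finset.range M, (⌊w' j * m⌋₊:ℝ))/TT M) atTop (nhds (w' j)) := by
    intro j
    have hbound : ∀ M : ℕ, 0 ≤ w' j * TT M - ∑ m ∈ Finset.range M, (⌊w' j * m⌋₊:ℝ)
        ∧ w' j * TT M - ∑ m ∈ Finset.range M, (⌊w' j * m⌋₊:ℝ) ≤ M := by
      intro M
      rw [hTTdef]
      simp only []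
      rw [Finset.mul_sum, ← Finset.sum_sub_distrib]
      constructor
      · apply Finset.sum_nonneg
        intro m _
        have := Nat.floor_le (mul_nonneg (hw'0 j) (Nat.cast_nonneg m))
        linarith
      · calc ∑ m ∈ Finset.range M, (w' j * (m:ℝ) - (⌊w' j * m⌋₊:ℝ))
            ≤ ∑ _m ∈ Finset.range M, (1:ℝ) := by
              apply Finset.sum_le_sum
              intro m _
              have := Nat.lt_floor_add_one (w' j * (m:ℝ))
              linarith
        _ = M := by simp
    have hdiff : Tendsto
        (fun M : ℕ => (∑ m ∈ Finset.range M, (⌊w' j * m⌋₊:ℝ))/TT M - w' j) atTop (nhds 0) := by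
      apply squeeze_zero_norm' (a := fun M : ℕ => (M:ℝ)/TT M) ?_ hMT
      filter_upwards [eventually_ge_atTop 2] with M hM
      have hpos := hTTpos M hM
      have hb := hbound M
      have heq : (∑ m ∈ Finset.range M, (⌊w' j * m⌋₊:ℝ))/TT M - w' j
          = -((w' j * TT M - ∑ m ∈ Finset.range M, (⌊w' j * m⌋₊:ℝ))/TT M) := by
        field_simp
        ring
      rw [heq, norm_neg, Real.norm_eq_abs, abs_of_nonneg (div_nonneg hb.1 hpos.le)]
      gcongr
      exact hb.2
    have := hdiff.add (tendsto_const_nhds (x := w' j) (f := atTop))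
    simpa using this
  set NR : ℕ → ℝ := fun M => (N M : ℝ) with hNRdef
  have hNR : ∀ M, NR M = M * K
      + (∑ j, ∑ m ∈ Finset.range M, (⌊w' j * m⌋₊:ℝ)) * L := by
    intro M
    simp only [hNRdef]
    rw [hNM M]
    push_cast
    ring
  have hNT : Tendsto (fun M => NR M/TT M) atTop (nhds (L:ℝ)) := by
    have hsumW : Tendsto (fun M : ℕ => ∑ j, (∑ m ∈ Finset.range M, (⌊w' j * m⌋₊:ℝ))/TT M)
        atTop (nhds 1) := by
      have := tendsto_finset_sum Finset.univ (fun j (_ : j ∈ Finset.univ) => hWT j)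
      rwa [hw'1] at this
    have hlim := (hMT.const_mul (K:ℝ)).add (hsumW.const_mul (L:ℝ))
    have heq : (K:ℝ)*0 + (L:ℝ)*1 = (L:ℝ) := by ring
    rw [heq] at hlim
    apply hlim.congr
    intro M
    rw [hNR M, ← Finset.sum_div]
    ring
  have hLne : ((L:ℝ)) ≠ 0 := Nat.cast_ne_zero.mpr (by omega)
  have hTN : Tendsto (fun M => TT M/NR M) atTop (nhds ((L:ℝ)⁻¹)) := by
    have := hNT.inv₀ hLne
    apply this.congr
    intro M
    rw [inv_div]
  have hSTlim : Tendsto (fun M => (TT M)⁻¹ • ((catList B M).map g).sum) atTop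
      (nhds (∑ j, (w' j * (Mp j:ℝ)) • uc j)) := by
    have hterm : ∀ M : ℕ, (TT M)⁻¹ • ((catList B M).map g).sum
        = ((M:ℝ)/TT M) • D + ∑ j,
          ((((∑ m ∈ Finset.range M, (⌊w' j * m⌋₊:ℝ)))/TT M) * (Mp j:ℝ)) • uc j := by
      intro M
      rw [hSM M, smul_add]
      congr 1
      · rw [← Nat.cast_smul_eq_nsmul ℝ, smul_smul]
        congr 1
        rw [div_eq_mul_inv]
        ring
      · rw [Finset.smul_sum]
        refine Finset.sum_congr rfl fun j _ => ?_
        rw [← Nat.cast_smul_eq_nsmul ℝ, smul_smul]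
        congr 1
        push_cast
        ring
    have h1 := hMT.smul_const D
    have h2 := tendsto_finset_sum (Finset.univ) fun j (_ : j ∈ Finset.univ) =>
      ((hWT j).mul_const ((Mp j:ℝ))).smul_const (uc j)
    have h3 := h1.add h2
    rw [zero_smul, zero_add] at h3
    exact h3.congr (fun M => (hterm M).symm)
  have hucalt : ∀ j, toR ((c j).map δ).sum = uc j := by
    intro j
    rw [toR_list_sum, List.map_map]
    rfl
  have hLu : (L:ℝ)⁻¹ • (∑ j, (w' j * (Mp j:ℝ)) • uc j) = u := by
    rw [Finset.smul_sum, hu']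
    refine Finset.sum_congr rfl fun j _ => ?_
    rw [hzc j, hucalt j, smul_smul, smul_smul]
    congr 1
    have hMpL : (Mp j : ℝ) * ((c j).length : ℝ) = (L:ℝ) := by
      have h := hML j
      simp only [hLcdef] at h
      exact_mod_cast h
    have hlne : ((c j).length : ℝ) ≠ 0 := by
      have h0 := List.length_pos_iff.mpr (hcne j)
      exact Nat.cast_ne_zero.mpr (by omega)
    field_simp
    linear_combination w' j * hMpL
  have hsumck : ∀ M, ∑ k ∈ Finset.range (N M), toR (δ (f k)) = ((catList B M).map g).sum := by
    intro M
    have h := sum_range_length_map (catList B M) g f (fun k h => hfeq M k h)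
    simpa only [hNdef, hgdef] using h
  have hcheck : Tendsto (fun M => ((N M:ℝ))⁻¹ • ∑ k ∈ Finset.range (N M), toR (δ (f k)))
      atTop (nhds u) := by
    have hmain := hTN.smul hSTlim
    rw [hLu] at hmain
    apply hmain.congr'
    filter_upwards [eventually_ge_atTop 2] with M hM
    have hTTne : TT M ≠ 0 := ne_of_gt (hTTpos M hM)
    rw [hsumck M, smul_smul]
    congr 1
    rw [div_eq_mul_inv, mul_right_comm, mul_inv_cancel₀ hTTne, one_mul]
  have hratio : Tendsto (fun M => ((N (M+1):ℝ))/(N M)) atTop (nhds 1) := by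
    have hTT1 : Tendsto (fun M : ℕ => TT (M+1)/TT M) atTop (nhds 1) := by
      have hlim : Tendsto (fun M : ℕ => 1 + 2/((M:ℝ)-1)) atTop (nhds (1+0)) :=
        tendsto_const_nhds.add (Tendsto.div_atTop tendsto_const_nhds
          (tendsto_atTop_add_const_right _ (-1) tendsto_natCast_atTop_atTop))
      rw [add_zero] at hlim
      apply hlim.congr'
      filter_upwards [eventually_ge_atTop 2] with M hM
      have h2 : (2:ℝ) ≤ (M:ℝ) := by exact_mod_cast hM
      have e1 := hTTeq M
      have e2 := hTTeq (M+1)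
      push_cast at e2
      have hTTneM : TT M ≠ 0 := ne_of_gt (hTTpos M hM)
      have hm1 : (M:ℝ) - 1 ≠ 0 := ne_of_gt (by linarith)
      field_simp
      linear_combination ((M:ℝ)+1)/2 * e1 - ((M:ℝ)-1)/2 * e2
    have hNRpos : ∀ M : ℕ, 2 ≤ M → (0:ℝ) < NR M := by
      intro M hM
      have hNM2 : 2 ≤ N M := le_trans hM (hNge M)
      simp only [hNRdef]
      exact Nat.cast_pos.mpr (by omega)
    have hcomp := ((hNT.comp (tendsto_add_atTop_nat 1)).mul hTT1).mul hTN
    have heq : ((L:ℝ) * 1) * (L:ℝ)⁻¹ = 1 := by field_simp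
    rw [heq] at hcomp
    apply hcomp.congr'
    filter_upwards [eventually_ge_atTop 2] with M hM
    have h1 : TT M ≠ 0 := ne_of_gt (hTTpos M hM)
    have h2 : TT (M+1) ≠ 0 := ne_of_gt (hTTpos (M+1) (by omega))
    have h3 : NR M ≠ 0 := ne_of_gt (hNRpos M hM)
    show NR (M+1) / TT (M+1) * (TT (M+1) / TT M) * (TT M / NR M) = (N (M+1) : ℝ) / (N M : ℝ)
    have h4 : (N (M+1) : ℝ) = NR (M+1) := rfl
    have h5 : (N M : ℝ) = NR M := rfl
    rw [h4, h5]
    field_simp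
  have hmono : StrictMono N := by
    apply strictMono_nat_of_lt_succ
    intro M
    simp only [hNdef]
    rw [show catList B (M+1) = catList B M ++ B M from rfl, List.length_append]
    exact lt_add_of_pos_right _ (List.length_pos_iff.mpr (hBne M))
  haveI : Nonempty E := ⟨e₀⟩
  set C : ℝ := Finset.univ.sup' Finset.univ_nonempty (fun e => ‖g e‖) with hCdef
  have hCb : ∀ k : ℕ, ‖toR (δ (f k))‖ ≤ C :=
    fun k => Finset.le_sup' (fun e => ‖g e‖) (Finset.mem_univ (f k))
  exact hasVelocity_of_range δ f u
    (cesaro_subseq (fun k => toR (δ (f k))) C hCb N hmono u hcheck hratio)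
end

section
/- Main theorem: let (G, δ) be a displacement graph in dimension d and suppose G is strongly connected. Then the set of all velocities of trajectories of (G, δ), i.e. {u ∈ ℝ^d : there is a trajectory f with (1/n)·∑_{k=1}^n δ(f(k)) → u}, equals the convex hull in ℝ^d of the set of basic velocities of (G, δ). -/
namespace DG

variable {d : ℕ} {V E : Type*} (s t : E → V) (δ : E → Fin d → ℤ)

/-- displacement sum of a list of edges, in ℝ^d -/
def dS (p : List E) : EuclideanSpace ℝ (Fin d) := toR ((p.map δ).sum)

lemma toR_add (x y : Fin d → ℤ) : toR (x + y) = toR x + toR y := by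
  ext i; simp [toR, Pi.add_apply]

lemma toR_zero : toR (0 : Fin d → ℤ) = 0 := by ext i; simp [toR]


@[simp] lemma dS_nil : dS δ ([] : List E) = 0 := by simp [dS, toR_zero]

@[simp] lemma dS_append (p q : List E) : dS δ (p ++ q) = dS δ p + dS δ q := by
  simp [dS, toR_add]

@[simp] lemma dS_cons (e : E) (p : List E) : dS δ (e :: p) = toR (δ e) + dS δ p := by
  simp [dS, toR_add]

lemma norm_dS_le {C : ℝ} (hC : ∀ e : E, ‖toR (δ e)‖ ≤ C) (p : List E) :
    ‖dS δ p‖ ≤ p.length * C := by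
  induction p with
  | nil => simp
  | cons e q ih =>
      calc ‖dS δ (e :: q)‖ ≤ ‖toR (δ e)‖ + ‖dS δ q‖ := by rw [dS_cons]; exact norm_add_le _ _
      _ ≤ C + q.length * C := add_le_add (hC e) ih
      _ = (e :: q).length * C := by simp; ring

/-- a walk from a to b -/
def WF (a b : V) (p : List E) : Prop :=
  p.Chain' (fun e f => t e = s f) ∧ p.head?.map s = some a ∧ p.getLast?.map t = some b

variable {s t}

lemma WF.ne_nil {a b : V} {p : List E} (h : WF s t a b p) : p ≠ [] := by
  rintro rfl; simp [WF] at h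

lemma WF.append {a b c : V} {p q : List E} (hp : WF s t a b p) (hq : WF s t b c q) :
    WF s t a c (p ++ q) := by
  obtain ⟨hc1, hh1, hl1⟩ := hp
  obtain ⟨hc2, hh2, hl2⟩ := hq
  refine ⟨?_, ?_, ?_⟩
  · rw [List.Chain', List.isChain_append]
    refine ⟨hc1, hc2, ?_⟩
    intro x hx y hy
    rw [hx] at hl1; rw [hy] at hh2
    simp at hl1 hh2; rw [hl1, hh2]
  · rw [List.head?_append]
    cases hp' : p.head? with
    | none => simp [hp'] at hh1
    | some e => rw [hp'] at hh1; simpa using hh1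
  · rw [List.getLast?_append]
    cases hq' : q.getLast? with
    | none => simp [hq'] at hl2
    | some e => rw [hq'] at hl2; simpa using hl2

lemma WF.pow {a : V} {p : List E} (hp : WF s t a a p) (n : ℕ) :
    WF s t a a (List.replicate (n + 1) p).flatten := by
  induction n with
  | zero => simpa using hp
  | succ m ih =>
      have : (List.replicate (m + 2) p).flatten = p ++ (List.replicate (m + 1) p).flatten := by
        rw [List.replicate_succ, List.flatten_cons]
      rw [this]; exact hp.append ih

lemma pathFrom_iff_WF {a b : V} {p : List E} : PathFrom s t a b p ↔ WF s t a b p := by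
  constructor
  · rintro ⟨h, hc, hh, hl⟩
    exact ⟨hc, by rw [List.head?_eq_head h]; simp [hh], by rw [List.getLast?_eq_getLast h]; simp [hl]⟩
  · rintro ⟨hc, hh, hl⟩
    have h : p ≠ [] := by rintro rfl; simp at hh
    refine ⟨h, hc, ?_, ?_⟩
    · rw [List.head?_eq_head h] at hh; simpa using hh
    · rw [List.getLast?_eq_getLast h] at hl; simpa using hl

lemma IsCycleList.toWF {c : List E} (h : IsCycleList s t c) :
    ∃ a, WF s t a a c := by
  obtain ⟨hne, hc, hcl, _⟩ := h
  refine ⟨s (c.head hne), hc, by rw [List.head?_eq_head hne]; rfl, ?_⟩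
  rw [List.getLast?_eq_getLast hne]; simp [← hcl]

@[simp] lemma length_flatten_replicate (n : ℕ) (p : List E) :
    (List.replicate n p).flatten.length = n * p.length := by
  induction n with
  | zero => simp
  | succ m ih => rw [List.replicate_succ, List.flatten_cons]; simp [ih]; ring

@[simp] lemma dS_flatten_replicate (n : ℕ) (p : List E) :
    dS δ (List.replicate n p).flatten = n • dS δ p := by
  induction n with
  | zero => simp
  | succ m ih => rw [List.replicate_succ, List.flatten_cons]; simp [ih, succ_nsmul]; abel

end DG



namespace DG

variable {d : ℕ} {V E : Type*} {s t : E → V} (δ : E → Fin d → ℤ)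

lemma split_first {g : E → V} {b : V} {l : List E} (h : b ∈ l.map g) :
    ∃ l₁ x l₂, l = l₁ ++ x :: l₂ ∧ g x = b ∧ b ∉ l₁.map g := by
  induction l with
  | nil => simp at h
  | cons a l ih =>
      by_cases hab : g a = b
      · exact ⟨[], a, l, rfl, hab, by simp⟩
      · have h' : b ∈ l.map g := by
          simp only [List.map_cons, List.mem_cons] at h
          tauto
        obtain ⟨l₁, x, l₂, rfl, hx, hb⟩ := ih h'
        refine ⟨a :: l₁, x, l₂, rfl, hx, ?_⟩
        simp only [List.map_cons, List.mem_cons]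
        push_neg
        exact ⟨fun hh => hab hh.symm, hb⟩

lemma decomp_aux : ∀ (p r : List E),
    (r ++ p).Chain' (fun e f => t e = s f) → (r.map s).Nodup →
    ∃ (cs : List (List E)) (r' : List E),
      (∀ c ∈ cs, IsCycleList s t c) ∧
      dS δ r + dS δ p = (cs.map (dS δ)).sum + dS δ r' ∧
      r.length + p.length = (cs.map List.length).sum + r'.length ∧
      (r'.map s).Nodup ∧ (cs = [] → r' = r ++ p) := by
  intro p
  induction p with
  | nil =>
      intro r hch hnd
      exact ⟨[], r, by simp, by simp, by simp, hnd, by simp⟩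
  | cons e p' ih =>
      intro r hch hnd
      by_cases hs : s e ∈ r.map s
      · obtain ⟨r₁, x, r₂, rfl, hx, hnot⟩ := split_first hs
        rw [List.append_assoc] at hch
        rw [List.Chain', List.isChain_append] at hch
        obtain ⟨hch1, hch2, hJ1⟩ := hch
        rw [List.isChain_append] at hch2
        obtain ⟨hch2a, hch2b, hJ2⟩ := hch2
        -- the cycle
        have hcyc : IsCycleList s t (x :: r₂) := by
          refine ⟨by simp, hch2a, ?_, ?_⟩
          · have := hJ2 ((x :: r₂).getLast (by simp)) (List.getLast?_eq_getLast (by simp)) e rfl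
            simp only [List.head_cons]
            rw [hx, ← this]
          · have hsub : List.Sublist ((x :: r₂).map s) ((r₁ ++ x :: r₂).map s) :=
              (List.sublist_append_right r₁ (x :: r₂)).map s
            exact hnd.sublist hsub
        -- new accumulator
        have hch' : ((r₁ ++ [e]) ++ p').Chain' (fun e f => t e = s f) := by
          rw [List.append_assoc]
          rw [List.Chain', List.isChain_append]
          refine ⟨hch1, hch2b, ?_⟩
          intro a ha y hy
          have := hJ1 a ha x rfl
          have h2 : y = e := by simp at hy; exact hy.symm
          rw [h2, this, hx]
        have hnd' : ((r₁ ++ [e]).map s).Nodup := by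
          rw [List.map_append, List.nodup_append]
          refine ⟨?_, by simp, ?_⟩
          · have hsub : List.Sublist (r₁.map s) ((r₁ ++ x :: r₂).map s) :=
              (List.sublist_append_left r₁ (x :: r₂)).map s
            exact hnd.sublist hsub
          · intro a ha b hb hab; subst hab
            simp at hb
            rw [hb] at ha
            exact hnot ha
        obtain ⟨cs, r', h1, h2, h3, h4, h5⟩ := ih (r₁ ++ [e]) hch' hnd'
        refine ⟨(x :: r₂) :: cs, r', ?_, ?_, ?_, h4, by simp⟩
        · intro c hc
          rcases List.mem_cons.1 hc with rfl | hc
          · exact hcyc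
          · exact h1 c hc
        · simp only [List.map_cons, List.sum_cons]
          simp only [dS_append, dS_cons] at h2 ⊢
          rw [dS_nil] at h2
          linear_combination (norm := module) h2
        · simp only [List.map_cons, List.sum_cons]
          simp only [List.length_append, List.length_cons] at h3 ⊢
          simp at h3
          omega
      · have hch' : ((r ++ [e]) ++ p').Chain' (fun e f => t e = s f) := by
          rw [List.append_assoc]
          simpa using hch
        have hnd' : ((r ++ [e]).map s).Nodup := by
          rw [List.map_append, List.nodup_append]
          refine ⟨hnd, by simp, ?_⟩
          intro a ha b hb hab; subst hab
          simp at hb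
          rw [hb] at ha
          exact hs ha
        obtain ⟨cs, r', h1, h2, h3, h4, h5⟩ := ih (r ++ [e]) hch' hnd'
        refine ⟨cs, r', h1, ?_, ?_, h4, ?_⟩
        · simp only [dS_append, dS_cons] at h2 ⊢
          rw [dS_nil] at h2
          linear_combination (norm := module) h2
        · simp only [List.length_append, List.length_cons] at h3 ⊢
          simp at h3
          omega
        · intro hcs
          rw [h5 hcs, List.append_assoc]
          rfl

/-- full decomposition of a walk into cycles plus a short remainder -/
lemma decomp (p : List E) (hch : p.Chain' (fun e f => t e = s f)) :
    ∃ (cs : List (List E)) (r' : List E),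
      (∀ c ∈ cs, IsCycleList s t c) ∧
      dS δ p = (cs.map (dS δ)).sum + dS δ r' ∧
      p.length = (cs.map List.length).sum + r'.length ∧
      (r'.map s).Nodup ∧ (cs = [] → r' = p) := by
  obtain ⟨cs, r', h1, h2, h3, h4, h5⟩ := decomp_aux δ p [] (by simpa using hch) (by simp)
  exact ⟨cs, r', h1, by simpa using h2, by simpa using h3, h4, by simpa using h5⟩

end DG


namespace DG

variable {d : ℕ} {V E : Type*} [Fintype V] {s t : E → V} (δ : E → Fin d → ℤ)

include δ in
lemma exists_cycle (hconn : StronglyConnected s t) [Nonempty V] :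
    ∃ c : List E, IsCycleList s t c := by
  obtain ⟨v⟩ := (inferInstance : Nonempty V)
  obtain ⟨p, hp⟩ := hconn v v
  rw [pathFrom_iff_WF] at hp
  set q := (List.replicate (Fintype.card V + 1) p).flatten with hq
  have hWF : WF s t v v q := hp.pow (Fintype.card V)
  obtain ⟨cs, r', h1, _, h3, h4, h5⟩ := decomp δ q hWF.1
  rcases cs with _ | ⟨c, cs⟩
  · exfalso
    have hr : r' = q := h5 rfl
    have hlen : r'.length ≤ Fintype.card V := by
      have := h4.length_le_card
      simpa using this
    rw [hr] at hlen
    have hq1 : 1 ≤ p.length := by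
      have := hp.ne_nil
      exact List.length_pos_iff.2 this
    have : q.length = (Fintype.card V + 1) * p.length := by
      rw [hq, length_flatten_replicate]
    nlinarith
  · exact ⟨c, h1 c (by simp)⟩

lemma norm_basic_le {C : ℝ} (hC : ∀ e : E, ‖toR (δ e)‖ ≤ C) {u : EuclideanSpace ℝ (Fin d)}
    (hu : u ∈ basicVelocities s t δ) : ‖u‖ ≤ C := by
  obtain ⟨c, hc, rfl⟩ := hu
  have hne : c ≠ [] := hc.1
  have h1 : (1 : ℝ) ≤ c.length := by exact_mod_cast List.length_pos_iff.2 hne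
  have h2 : ‖toR ((c.map δ).sum)‖ ≤ c.length * C := norm_dS_le δ hC c
  rw [norm_smul]
  have h0 : (0:ℝ) < c.length := by linarith
  rw [Real.norm_eq_abs, abs_inv, abs_of_pos h0]
  rw [inv_mul_le_iff₀ h0]
  linarith

lemma norm_mem_K_le {C : ℝ} (hC : ∀ e : E, ‖toR (δ e)‖ ≤ C) (hC0 : 0 ≤ C)
    {u : EuclideanSpace ℝ (Fin d)} (hu : u ∈ convexHull ℝ (basicVelocities s t δ)) :
    ‖u‖ ≤ C := by
  have : convexHull ℝ (basicVelocities s t δ) ⊆ Metric.closedBall 0 C := by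
    apply convexHull_min
    · intro x hx
      simpa [Metric.mem_closedBall, dist_zero_right] using norm_basic_le δ hC hx
    · exact convex_closedBall 0 C
  simpa [Metric.mem_closedBall, dist_zero_right] using this hu

lemma list_sum_norm_le {C : ℝ} (hC : ∀ e : E, ‖toR (δ e)‖ ≤ C) (cs : List (List E)) :
    ‖(cs.map (dS δ)).sum‖ ≤ ((cs.map List.length).sum : ℝ) * C := by
  induction cs with
  | nil => simp
  | cons c cs ih =>
      simp only [List.map_cons, List.sum_cons]
      calc ‖dS δ c + (cs.map (dS δ)).sum‖ ≤ ‖dS δ c‖ + ‖(cs.map (dS δ)).sum‖ := norm_add_le _ _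
      _ ≤ c.length * C + ((cs.map List.length).sum : ℝ) * C := add_le_add (norm_dS_le δ hC c) ih
      _ = (((c.length : ℕ) + (cs.map List.length).sum : ℕ) : ℝ) * C := by push_cast; ring

lemma list_sum_eq_fin {M : Type*} [AddCommMonoid M] (g : List E → M) (cs : List (List E)) :
    (cs.map g).sum = ∑ i : Fin cs.length, g cs[i] := by
  rw [← Fin.sum_univ_getElem (cs.map g)]
  apply Fintype.sum_equiv (finCongr (by simp))
  intro i
  simp

lemma mem_K_of_cycles (cs : List (List E)) (h1 : ∀ c ∈ cs, IsCycleList s t c)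
    (hne : cs ≠ []) :
    (((cs.map List.length).sum : ℝ))⁻¹ • (cs.map (dS δ)).sum ∈
      convexHull ℝ (basicVelocities s t δ) := by
  classical
  set w : Fin cs.length → ℝ := fun i => (cs[i].length : ℝ) with hw
  set z : Fin cs.length → EuclideanSpace ℝ (Fin d) :=
    fun i => (w i)⁻¹ • dS δ cs[i] with hz
  have hlenpos : ∀ i : Fin cs.length, (0:ℝ) < w i := by
    intro i
    simp only [hw]
    exact_mod_cast List.length_pos_iff.2 (h1 _ (List.getElem_mem _)).1
  have hsumR : ((cs.map List.length).sum : ℝ) = ∑ i : Fin cs.length, w i := by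
    rw [Nat.cast_list_sum, List.map_map]
    exact list_sum_eq_fin _ cs
  have hpos : (0:ℝ) < ∑ i : Fin cs.length, w i := by
    rw [← hsumR]
    have h0 : cs.length ≠ 0 := by simpa using hne
    have hl : 1 ≤ (cs.map List.length).sum := by
      rcases cs with _ | ⟨c, cs⟩
      · simp at hne
      · have := List.length_pos_iff.2 (h1 c (by simp)).1
        simp only [List.map_cons, List.sum_cons]
        omega
    exact_mod_cast hl
  have key : Finset.univ.centerMass w z ∈ convexHull ℝ (basicVelocities s t δ) :=
    Finset.centerMass_mem_convexHull _ (fun i _ => le_of_lt (hlenpos i)) hpos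
      (fun i _ => ⟨cs[i], h1 _ (List.getElem_mem _), rfl⟩)
  have hcm : Finset.univ.centerMass w z
      = (((cs.map List.length).sum : ℝ))⁻¹ • (cs.map (dS δ)).sum := by
    rw [Finset.centerMass, hsumR]
    congr 1
    rw [list_sum_eq_fin (dS δ) cs]
    apply Finset.sum_congr rfl
    intro i _
    rw [hz, smul_smul, mul_inv_cancel₀ (ne_of_gt (hlenpos i)), one_smul]
  rwa [hcm] at key

end DG


namespace DG

variable {d : ℕ} {V E : Type*} [Fintype V] [Nonempty V] {s t : E → V} (δ : E → Fin d → ℤ)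

lemma norm_mean_le {C : ℝ} (hC : ∀ e : E, ‖toR (δ e)‖ ≤ C) {p : List E} (hp : p ≠ []) :
    ‖(p.length : ℝ)⁻¹ • dS δ p‖ ≤ C := by
  have h1 : (1 : ℝ) ≤ p.length := by exact_mod_cast List.length_pos_iff.2 hp
  have h0 : (0:ℝ) < p.length := by linarith
  rw [norm_smul, Real.norm_eq_abs, abs_inv, abs_of_pos h0, inv_mul_le_iff₀ h0]
  have := norm_dS_le δ hC p
  linarith

lemma dist_mean_le {C : ℝ} (hC : ∀ e : E, ‖toR (δ e)‖ ≤ C) (hC0 : 0 ≤ C)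
    (hconn : StronglyConnected s t)
    (p : List E) (hch : p.Chain' (fun e f => t e = s f)) (hp : p ≠ []) :
    ∃ κ ∈ convexHull ℝ (basicVelocities s t δ),
      dist ((p.length : ℝ)⁻¹ • dS δ p) κ ≤ 2*C*(Fintype.card V + 1)/p.length := by
  obtain ⟨cs, r', h1, h2, h3, h4, h5⟩ := decomp δ p hch
  have hn1 : (1:ℝ) ≤ p.length := by exact_mod_cast List.length_pos_iff.2 hp
  have hn0 : (0:ℝ) < p.length := by linarith
  have hR : r'.length ≤ Fintype.card V := by
    have := h4.length_le_card
    simpa using this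
  rcases eq_or_ne cs [] with rfl | hcs
  · -- no cycles: p itself is short
    obtain ⟨c₀, hc₀⟩ := exists_cycle δ hconn
    refine ⟨(c₀.length : ℝ)⁻¹ • dS δ c₀, subset_convexHull ℝ _ ⟨c₀, hc₀, rfl⟩, ?_⟩
    have hb1 : ‖(p.length : ℝ)⁻¹ • dS δ p‖ ≤ C := norm_mean_le δ hC hp
    have hb2 : ‖(c₀.length : ℝ)⁻¹ • dS δ c₀‖ ≤ C := norm_mean_le δ hC hc₀.1
    have hd : dist ((p.length : ℝ)⁻¹ • dS δ p) ((c₀.length : ℝ)⁻¹ • dS δ c₀) ≤ 2*C := by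
      rw [dist_eq_norm]
      calc ‖_ - _‖ ≤ ‖(p.length : ℝ)⁻¹ • dS δ p‖ + ‖(c₀.length : ℝ)⁻¹ • dS δ c₀‖ :=
            norm_sub_le _ _
      _ ≤ 2*C := by linarith
    have hple : (p.length : ℝ) ≤ Fintype.card V := by
      have hr'p := h5 rfl
      rw [hr'p] at hR
      exact_mod_cast hR
    have : 2*C ≤ 2*C*(Fintype.card V + 1)/p.length := by
      rw [le_div_iff₀ hn0]
      nlinarith
    linarith
  · set n : ℝ := (p.length : ℝ) with hn
    set L : ℝ := ((cs.map List.length).sum : ℝ) with hL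
    set R : ℝ := (r'.length : ℝ) with hRdef
    have hL1 : (1:ℝ) ≤ L := by
      rcases cs with _ | ⟨c, cs'⟩
      · simp at hcs
      · have := List.length_pos_iff.2 (h1 c (by simp)).1
        rw [hL]
        have : 1 ≤ (((c :: cs').map List.length).sum) := by
          simp only [List.map_cons, List.sum_cons]
          omega
        exact_mod_cast this
    have hL0 : (0:ℝ) < L := by linarith
    have hnLR : n = L + R := by rw [hn, hL, hRdef]; exact_mod_cast h3
    have hRC : R ≤ Fintype.card V := by rw [hRdef]; exact_mod_cast hR
    refine ⟨L⁻¹ • (cs.map (dS δ)).sum, mem_K_of_cycles δ cs h1 hcs, ?_⟩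
    set S := (cs.map (dS δ)).sum with hS
    have hSn : ‖S‖ ≤ L * C := list_sum_norm_le δ hC cs
    have hrn : ‖dS δ r'‖ ≤ R * C := norm_dS_le δ hC r'
    have hid : (n:ℝ)⁻¹ • dS δ p - L⁻¹ • S = (n⁻¹ - L⁻¹) • S + n⁻¹ • dS δ r' := by
      rw [h2]
      module
    rw [dist_eq_norm, hid]
    have htri : ‖(n⁻¹ - L⁻¹) • S + n⁻¹ • dS δ r'‖
        ≤ |n⁻¹ - L⁻¹| * ‖S‖ + n⁻¹ * ‖dS δ r'‖ := by
      calc ‖(n⁻¹ - L⁻¹) • S + n⁻¹ • dS δ r'‖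
          ≤ ‖(n⁻¹ - L⁻¹) • S‖ + ‖n⁻¹ • dS δ r'‖ := norm_add_le _ _
      _ = |n⁻¹ - L⁻¹| * ‖S‖ + |n⁻¹| * ‖dS δ r'‖ := by
            rw [norm_smul, norm_smul, Real.norm_eq_abs, Real.norm_eq_abs]
      _ = |n⁻¹ - L⁻¹| * ‖S‖ + n⁻¹ * ‖dS δ r'‖ := by
            rw [abs_of_pos (inv_pos.2 hn0)]
    have habs : |n⁻¹ - L⁻¹| = L⁻¹ - n⁻¹ := by
      rw [abs_of_nonpos]
      · ring
      · have : L ≤ n := by linarith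
        have := inv_anti₀ hL0 this
        linarith
    have key1 : |n⁻¹ - L⁻¹| * ‖S‖ ≤ R * C / n := by
      rw [habs]
      have hfac : (0:ℝ) ≤ L⁻¹ - n⁻¹ := by
        have : L ≤ n := by linarith
        have := inv_anti₀ hL0 this
        linarith
      calc (L⁻¹ - n⁻¹) * ‖S‖ ≤ (L⁻¹ - n⁻¹) * (L * C) := by
            apply mul_le_mul_of_nonneg_left hSn hfac
      _ = R * C / n := by
            have hn' : n ≠ 0 := ne_of_gt hn0
            have hL' : L ≠ 0 := ne_of_gt hL0
            have hR' : R = n - L := by linarith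
            rw [hR']
            field_simp
    have key2 : n⁻¹ * ‖dS δ r'‖ ≤ R * C / n := by
      calc n⁻¹ * ‖dS δ r'‖ ≤ n⁻¹ * (R * C) := by
            apply mul_le_mul_of_nonneg_left hrn (by positivity)
      _ = R * C / n := by ring
    have hfin : R * C / n + R * C / n ≤ 2*C*(Fintype.card V + 1)/n := by
      rw [← add_div, div_le_div_iff_of_pos_right hn0]
      nlinarith
    linarith

end DG


namespace DG

open Filter Metric

variable {d : ℕ} {V E : Type*} [Fintype V] [Nonempty V] [Fintype E]
  {s t : E → V} (δ : E → Fin d → ℤ)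

lemma basic_finite : (basicVelocities s t δ).Finite := by
  apply Set.Finite.subset
    (((List.finite_length_le E (Fintype.card V))).image
      (fun c : List E => (c.length : ℝ)⁻¹ • dS δ c))
  rintro u ⟨c, hc, rfl⟩
  refine ⟨c, ?_, rfl⟩
  obtain ⟨hne, _, _, hnd⟩ := hc
  have := hnd.length_le_card
  simpa using this

lemma traj_chain (f : ℕ → E) (hf : IsTrajectory s t f) (n : ℕ) :
    ((List.range n).map (fun k => f (k+1))).Chain' (fun e f' => t e = s f') := by
  rw [List.Chain', List.isChain_map]
  rcases n with _ | m
  · simp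
  · rw [List.isChain_range_succ]
    intro m hm
    exact (hf (m+1)).symm

lemma traj_dS (f : ℕ → E) (n : ℕ) :
    dS δ ((List.range n).map (fun k => f (k+1))) = ∑ k ∈ Finset.Icc 1 n, toR (δ (f k)) := by
  induction n with
  | zero => simp
  | succ m ih =>
      rw [List.range_succ, List.map_append]
      rw [dS_append, ih]
      rw [Finset.sum_Icc_succ_top (by omega : 1 ≤ m + 1)]
      simp

lemma velocitySet_subset_hull {C : ℝ} (hC : ∀ e : E, ‖toR (δ e)‖ ≤ C) (hC0 : 0 ≤ C)
    (hconn : StronglyConnected s t) :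
    velocitySet s t δ ⊆ convexHull ℝ (basicVelocities s t δ) := by
  intro u hu
  obtain ⟨f, hf, hv⟩ := hu
  set K := convexHull ℝ (basicVelocities s t δ) with hK
  have hKcl : IsClosed K := ((basic_finite δ).isCompact_convexHull (𝕜 := ℝ)).isClosed
  obtain ⟨c₀, hc₀⟩ := exists_cycle δ hconn
  have hKne : K.Nonempty := ⟨_, subset_convexHull ℝ _ ⟨c₀, hc₀, rfl⟩⟩
  set avg := fun n : ℕ => (n : ℝ)⁻¹ • ∑ k ∈ Finset.Icc 1 n, toR (δ (f k)) with havg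
  have hbound : ∀ n : ℕ, 1 ≤ n → infDist (avg n) K ≤ 2*C*(Fintype.card V + 1)/n := by
    intro n hn
    set p := (List.range n).map (fun k => f (k+1)) with hp
    have hplen : p.length = n := by simp [hp]
    have hpne : p ≠ [] := by
      intro h
      rw [h] at hplen
      simp at hplen
      omega
    obtain ⟨κ, hκ, hd⟩ := dist_mean_le δ hC hC0 hconn p (traj_chain f hf n) hpne
    have havgp : avg n = (p.length : ℝ)⁻¹ • dS δ p := by
      rw [hplen, havg, traj_dS]
    calc infDist (avg n) K ≤ dist (avg n) κ := infDist_le_dist_of_mem hκ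
    _ = dist ((p.length : ℝ)⁻¹ • dS δ p) κ := by rw [havgp]
    _ ≤ 2*C*(Fintype.card V + 1)/p.length := hd
    _ = 2*C*(Fintype.card V + 1)/n := by rw [hplen]
  have h1 : Tendsto (fun n => infDist (avg n) K) atTop (nhds (infDist u K)) :=
    ((continuous_infDist_pt K).tendsto u).comp hv
  have h2 : Tendsto (fun n : ℕ => 2*C*(Fintype.card V + 1)/n) atTop (nhds 0) :=
    tendsto_const_div_atTop_nhds_zero_nat _
  have hle : infDist u K ≤ 0 := by
    apply le_of_tendsto_of_tendsto h1 h2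
    filter_upwards [Filter.eventually_ge_atTop 1] with n hn
    exact hbound n hn
  have h0 : infDist u K = 0 := le_antisymm hle (infDist_nonneg)
  exact (IsClosed.mem_iff_infDist_zero hKcl hKne).2 h0

end DG


namespace DG

variable {d : ℕ} {V E : Type*} {s t : E → V} (δ : E → Fin d → ℤ)

/-- set of mean displacements of closed walks -/
def WMeans (s t : E → V) (δ : E → Fin d → ℤ) : Set (EuclideanSpace ℝ (Fin d)) :=
  {u | ∃ (a : V) (p : List E), WF s t a a p ∧ u = (p.length : ℝ)⁻¹ • dS δ p}

variable (u : EuclideanSpace ℝ (Fin d))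

/-- error accounting: `a` is full-length constant error, `c` partial constant error,
`ε` per-step error. -/
def Err4 (l : List E) (a c ε : ℝ) : Prop :=
  0 ≤ a ∧ a ≤ c ∧ 0 ≤ ε ∧
  (∀ n ≤ l.length, ‖dS δ (l.take n) - (n : ℝ) • u‖ ≤ c + n * ε) ∧
  ‖dS δ l - (l.length : ℝ) • u‖ ≤ a + l.length * ε

lemma err4_nil {ε : ℝ} (hε : 0 ≤ ε) : Err4 δ u [] 0 0 ε := by
  refine ⟨le_refl _, le_refl _, hε, ?_, by simp⟩
  intro n hn
  simp at hn
  subst hn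
  simp

lemma err4_mono {l : List E} {a c ε a' c' ε' : ℝ} (h : Err4 δ u l a c ε)
    (ha : a ≤ a') (hc : c ≤ c') (he : ε ≤ ε') (hac : a' ≤ c') : Err4 δ u l a' c' ε' := by
  obtain ⟨h1, h2, h3, h4, h5⟩ := h
  refine ⟨le_trans h1 ha, hac, le_trans h3 he, ?_, ?_⟩
  · intro n hn
    calc ‖dS δ (l.take n) - (n : ℝ) • u‖ ≤ c + n * ε := h4 n hn
    _ ≤ c' + n * ε' := by
        have : (0:ℝ) ≤ n := Nat.cast_nonneg n
        nlinarith
  · calc ‖dS δ l - (l.length : ℝ) • u‖ ≤ a + l.length * ε := h5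
    _ ≤ a' + l.length * ε' := by
        have : (0:ℝ) ≤ l.length := Nat.cast_nonneg _
        nlinarith

lemma err4_partial_bound {C : ℝ} (hC : ∀ e : E, ‖toR (δ e)‖ ≤ C) (hu : ‖u‖ ≤ C)
    (l : List E) {n : ℕ} (hn : n ≤ l.length) :
    ‖dS δ (l.take n) - (n : ℝ) • u‖ ≤ 2 * C * n := by
  have h1 : ‖dS δ (l.take n)‖ ≤ (l.take n).length * C := norm_dS_le δ hC _
  have h2 : (l.take n).length = n := by simp [List.length_take]; omega
  have h3 : ‖(n : ℝ) • u‖ ≤ n * C := by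
    rw [norm_smul, Real.norm_eq_abs, Nat.abs_cast]
    exact mul_le_mul_of_nonneg_left hu (Nat.cast_nonneg n)
  calc ‖dS δ (l.take n) - (n : ℝ) • u‖ ≤ ‖dS δ (l.take n)‖ + ‖(n : ℝ) • u‖ := norm_sub_le _ _
  _ ≤ n * C + n * C := by rw [h2] at h1; exact add_le_add h1 h3
  _ = 2 * C * n := by ring

lemma err4_base {C : ℝ} (hC : ∀ e : E, ‖toR (δ e)‖ ≤ C) (hC0 : 0 ≤ C) (hu : ‖u‖ ≤ C)
    (l : List E) : Err4 δ u l (2*C*l.length) (2*C*l.length) 0 := by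
  refine ⟨by positivity, le_refl _, le_refl _, ?_, ?_⟩
  · intro n hn
    calc ‖dS δ (l.take n) - (n : ℝ) • u‖ ≤ 2*C*n := err4_partial_bound δ u hC hu l hn
    _ ≤ 2*C*l.length + n * 0 := by
        have : (n:ℝ) ≤ l.length := Nat.cast_le.2 hn
        nlinarith
  · have := err4_partial_bound δ u hC hu l (le_refl l.length)
    rw [List.take_length] at this
    calc ‖dS δ l - (l.length : ℝ) • u‖ ≤ 2*C*l.length := this
    _ = 2*C*l.length + l.length * 0 := by ring

lemma err4_walk {C : ℝ} (hC : ∀ e : E, ‖toR (δ e)‖ ≤ C) (hC0 : 0 ≤ C) (hu : ‖u‖ ≤ C)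
    {p : List E} (hp : p ≠ []) {ε : ℝ}
    (hmean : ‖(p.length : ℝ)⁻¹ • dS δ p - u‖ ≤ ε) :
    Err4 δ u p 0 (2*C*p.length) ε := by
  have hlen : (0:ℝ) < p.length := by exact_mod_cast List.length_pos_iff.2 hp
  have hε0 : 0 ≤ ε := le_trans (norm_nonneg _) hmean
  refine ⟨le_refl _, by positivity, hε0, ?_, ?_⟩
  · intro n hn
    calc ‖dS δ (p.take n) - (n : ℝ) • u‖ ≤ 2*C*n := err4_partial_bound δ u hC hu p hn
    _ ≤ 2*C*p.length + n * ε := by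
        have h1 : (n:ℝ) ≤ p.length := Nat.cast_le.2 hn
        have h2 : (0:ℝ) ≤ n := Nat.cast_nonneg n
        nlinarith
  · have key : dS δ p - (p.length : ℝ) • u = (p.length : ℝ) • ((p.length : ℝ)⁻¹ • dS δ p - u) := by
      rw [smul_sub, smul_smul, mul_inv_cancel₀ (ne_of_gt hlen), one_smul]
    rw [key, norm_smul, Real.norm_eq_abs, abs_of_pos hlen]
    calc (p.length : ℝ) * ‖(p.length : ℝ)⁻¹ • dS δ p - u‖ ≤ p.length * ε := by
          exact mul_le_mul_of_nonneg_left hmean (le_of_lt hlen)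
    _ = 0 + p.length * ε := by ring

lemma err4_append {X Y : List E} {ax cx εx ay cy εy : ℝ}
    (hX : Err4 δ u X ax cx εx) (hY : Err4 δ u Y ay cy εy) :
    Err4 δ u (X ++ Y) (ax + ay) (max cx (ax + cy)) (max εx εy) := by
  obtain ⟨hax, haxc, hεx, hpx, hfx⟩ := hX
  obtain ⟨hay, hayc, hεy, hpy, hfy⟩ := hY
  have hεm : 0 ≤ max εx εy := le_trans hεx (le_max_left _ _)
  refine ⟨by linarith, le_max_of_le_right (by linarith), hεm, ?_, ?_⟩
  · intro n hn
    rcases le_or_gt n X.length with hnx | hnx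
    · have htake : (X ++ Y).take n = X.take n := List.take_append_of_le_length hnx
      rw [htake]
      calc ‖dS δ (X.take n) - (n : ℝ) • u‖ ≤ cx + n * εx := hpx n hnx
      _ ≤ max cx (ax + cy) + n * max εx εy := by
          have h2 : (0:ℝ) ≤ n := Nat.cast_nonneg n
          have := le_max_left cx (ax + cy)
          have := le_max_left εx εy
          nlinarith
    · set m := n - X.length with hm
      have hnm : n = X.length + m := by omega
      have hmY : m ≤ Y.length := by
        rw [List.length_append] at hn
        omega
      have htake : (X ++ Y).take n = X ++ Y.take m := by
        rw [List.take_append]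
        congr 1
        · exact List.take_of_length_le (by omega)
      have hsplit : dS δ (X ++ Y.take m) - (n : ℝ) • u
          = (dS δ X - (X.length : ℝ) • u) + (dS δ (Y.take m) - (m : ℝ) • u) := by
        rw [dS_append, hnm]
        push_cast
        module
      rw [htake, hsplit]
      calc ‖_ + _‖ ≤ ‖dS δ X - (X.length : ℝ) • u‖ + ‖dS δ (Y.take m) - (m : ℝ) • u‖ :=
            norm_add_le _ _
      _ ≤ (ax + X.length * εx) + (cy + m * εy) := add_le_add hfx (hpy m hmY)
      _ ≤ max cx (ax + cy) + n * max εx εy := by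
          have h1 : (X.length:ℝ) + m = n := by exact_mod_cast hnm.symm
          have h2 : (0:ℝ) ≤ X.length := Nat.cast_nonneg _
          have h3 : (0:ℝ) ≤ m := Nat.cast_nonneg _
          have h4 := le_max_right cx (ax + cy)
          have h5 := le_max_left εx εy
          have h6 := le_max_right εx εy
          nlinarith
  · have hsplit : dS δ (X ++ Y) - ((X ++ Y).length : ℝ) • u
        = (dS δ X - (X.length : ℝ) • u) + (dS δ Y - (Y.length : ℝ) • u) := by
      rw [dS_append, List.length_append]
      push_cast
      module
    rw [hsplit]
    calc ‖_ + _‖ ≤ ‖dS δ X - (X.length : ℝ) • u‖ + ‖dS δ Y - (Y.length : ℝ) • u‖ :=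
          norm_add_le _ _
    _ ≤ (ax + X.length * εx) + (ay + Y.length * εy) := add_le_add hfx hfy
    _ ≤ (ax + ay) + (X ++ Y).length * max εx εy := by
        rw [List.length_append]
        push_cast
        have h2 : (0:ℝ) ≤ X.length := Nat.cast_nonneg _
        have h3 : (0:ℝ) ≤ Y.length := Nat.cast_nonneg _
        have h5 := le_max_left εx εy
        have h6 := le_max_right εx εy
        nlinarith

lemma err4_pow {C : ℝ} (hC : ∀ e : E, ‖toR (δ e)‖ ≤ C) (hC0 : 0 ≤ C) (hu : ‖u‖ ≤ C)
    {p : List E} (hp : p ≠ []) {ε : ℝ}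
    (hmean : ‖(p.length : ℝ)⁻¹ • dS δ p - u‖ ≤ ε) (m : ℕ) :
    Err4 δ u (List.replicate m p).flatten 0 (2*C*p.length) ε := by
  have hε0 : 0 ≤ ε := le_trans (norm_nonneg _) hmean
  induction m with
  | zero =>
      simp only [List.replicate_zero, List.flatten_nil]
      exact err4_mono δ u (err4_nil δ u hε0) (le_refl _) (by positivity) (le_refl _)
        (by positivity)
  | succ k ih =>
      rw [List.replicate_succ, List.flatten_cons]
      have := err4_append δ u (err4_walk δ u hC hC0 hu hp hmean) ih
      apply err4_mono δ u this
      · simp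
      · simp
      · simp
      · positivity

end DG


namespace DG

open Filter

variable {d : ℕ} {V E : Type*} {s t : E → V} (δ : E → Fin d → ℤ)

lemma basic_subset_WMeans : basicVelocities s t δ ⊆ WMeans s t δ := by
  rintro x ⟨c, hc, rfl⟩
  obtain ⟨a, ha⟩ := IsCycleList.toWF (s := s) (t := t) hc
  exact ⟨a, c, ha, rfl⟩

lemma mean_mem_WMeans {a : V} {p : List E} (hp : WF s t a a p) :
    (p.length : ℝ)⁻¹ • dS δ p ∈ WMeans s t δ := ⟨a, p, hp, rfl⟩

lemma ceil_div_tendsto (θ : ℝ) (hθ : 0 ≤ θ) :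
    Tendsto (fun N : ℕ => ((⌈(N : ℝ) * θ⌉₊ : ℕ) : ℝ) / N) atTop (nhds θ) := by
  have hupper : Tendsto (fun N : ℕ => θ + 1/(N:ℝ)) atTop (nhds θ) := by
    have h0 : Tendsto (fun N : ℕ => 1/(N:ℝ)) atTop (nhds 0) :=
      tendsto_one_div_atTop_nhds_zero_nat
    simpa using (tendsto_const_nhds (x := θ) (f := (atTop : Filter ℕ))).add h0
  apply tendsto_of_tendsto_of_tendsto_of_le_of_le' tendsto_const_nhds hupper
  · filter_upwards [eventually_ge_atTop 1] with N hN
    have hN0 : (0:ℝ) < N := by exact_mod_cast hN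
    rw [le_div_iff₀ hN0]
    calc θ * N = N * θ := by ring
    _ ≤ ⌈(N : ℝ) * θ⌉₊ := Nat.le_ceil _
  · filter_upwards [eventually_ge_atTop 1] with N hN
    have hN0 : (0:ℝ) < N := by exact_mod_cast hN
    rw [div_le_iff₀ hN0]
    have h1 : (⌈(N : ℝ) * θ⌉₊ : ℝ) < N * θ + 1 := Nat.ceil_lt_add_one (by positivity)
    calc (⌈(N : ℝ) * θ⌉₊ : ℝ) ≤ N * θ + 1 := le_of_lt h1
    _ = (θ + 1/N) * N := by field_simp

lemma WF.pow' {a : V} {p : List E} (hp : WF s t a a p) {m : ℕ} (hm : 1 ≤ m) :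
    WF s t a a (List.replicate m p).flatten := by
  obtain ⟨k, rfl⟩ := Nat.exists_eq_add_of_le hm
  rw [Nat.add_comm]
  exact hp.pow k

lemma binary_combo_mem_closure (hconn : StronglyConnected s t)
    {x y : EuclideanSpace ℝ (Fin d)} (hx : x ∈ WMeans s t δ) (hy : y ∈ WMeans s t δ)
    {θ : ℝ} (hθ0 : 0 ≤ θ) (hθ1 : θ ≤ 1) :
    θ • x + (1 - θ) • y ∈ closure (WMeans s t δ) := by
  rcases eq_or_lt_of_le hθ0 with rfl | hθ0'
  · simpa using subset_closure hy
  rcases eq_or_lt_of_le hθ1 with rfl | hθ1'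
  · simpa using subset_closure hx
  obtain ⟨v, p, hp, rfl⟩ := hx
  obtain ⟨w, q, hq, rfl⟩ := hy
  obtain ⟨P, hP⟩ := hconn v w
  obtain ⟨Q, hQ⟩ := hconn w v
  rw [pathFrom_iff_WF] at hP hQ
  set Lp := p.length with hLp
  set Lq := q.length with hLq
  have hLp1 : 1 ≤ Lp := List.length_pos_iff.2 hp.ne_nil
  have hLq1 : 1 ≤ Lq := List.length_pos_iff.2 hq.ne_nil
  have hLpR : (0:ℝ) < Lp := by exact_mod_cast hLp1
  have hLqR : (0:ℝ) < Lq := by exact_mod_cast hLq1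
  set x := (Lp : ℝ)⁻¹ • dS δ p with hxd
  set y := (Lq : ℝ)⁻¹ • dS δ q with hyd
  have hdSp : dS δ p = (Lp : ℝ) • x := by
    rw [hxd, smul_smul, mul_inv_cancel₀ (ne_of_gt hLpR), one_smul]
  have hdSq : dS δ q = (Lq : ℝ) • y := by
    rw [hyd, smul_smul, mul_inv_cancel₀ (ne_of_gt hLqR), one_smul]
  set A : ℕ → ℕ := fun N => ⌈(N : ℝ) * θ⌉₊ with hA
  set B : ℕ → ℕ := fun N => ⌈(N : ℝ) * (1 - θ)⌉₊ with hB
  set D := dS δ P + dS δ Q with hD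
  set L0 : ℝ := ((P.length + Q.length : ℕ) : ℝ) with hL0
  set Wc : ℕ → List E := fun N =>
    (List.replicate (A N * Lq) p).flatten ++
      (P ++ ((List.replicate (B N * Lp) q).flatten ++ Q)) with hWc
  have hA1 : ∀ N : ℕ, 1 ≤ N → 1 ≤ A N := by
    intro N hN
    have hN0 : (0:ℝ) < N := by exact_mod_cast hN
    rw [hA, Nat.one_le_ceil_iff]
    positivity
  have hB1 : ∀ N : ℕ, 1 ≤ N → 1 ≤ B N := by
    intro N hN
    have hN0 : (0:ℝ) < N := by exact_mod_cast hN
    rw [hB, Nat.one_le_ceil_iff]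
    have : (0:ℝ) < 1 - θ := by linarith
    positivity
  have hWF : ∀ N : ℕ, 1 ≤ N → WF s t v v (Wc N) := by
    intro N hN
    exact (hp.pow' (Nat.one_le_iff_ne_zero.2 (Nat.mul_ne_zero
        (Nat.one_le_iff_ne_zero.1 (hA1 N hN)) (Nat.one_le_iff_ne_zero.1 hLq1)))).append
      (hP.append (((hq.pow' (Nat.one_le_iff_ne_zero.2 (Nat.mul_ne_zero
        (Nat.one_le_iff_ne_zero.1 (hB1 N hN)) (Nat.one_le_iff_ne_zero.1 hLp1)))).append hQ)))
  set T : ℕ → ℝ := fun N => ((Wc N).length : ℝ) with hT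
  have hlenW : ∀ N : ℕ, T N = (A N : ℝ) * Lq * Lp + (B N : ℝ) * Lp * Lq + L0 := by
    intro N
    rw [hT]
    simp only [hWc, List.length_append, length_flatten_replicate]
    push_cast [hL0]
    ring
  have hTpos : ∀ N : ℕ, 1 ≤ N → (0:ℝ) < T N := by
    intro N hN
    rw [hlenW]
    have h1 : (1:ℝ) ≤ (A N : ℝ) := by exact_mod_cast hA1 N hN
    have h2 : (1:ℝ) ≤ (B N : ℝ) := by exact_mod_cast hB1 N hN
    have h3 : (0:ℝ) ≤ L0 := by rw [hL0]; positivity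
    have h4 : (0:ℝ) < (A N : ℝ) * Lq * Lp := by
      have : (0:ℝ) < (A N : ℝ) := by linarith
      exact mul_pos (mul_pos this hLqR) hLpR
    have h5 : (0:ℝ) ≤ (B N : ℝ) * Lp * Lq := by positivity
    linarith
  have hdSW : ∀ N : ℕ, dS δ (Wc N)
      = ((A N : ℝ) * Lq * Lp) • x + ((B N : ℝ) * Lp * Lq) • y + D := by
    intro N
    rw [hWc]
    simp only [dS_append, dS_flatten_replicate]
    rw [hdSp, hdSq, hD]
    rw [← Nat.cast_smul_eq_nsmul ℝ (A N * Lq), ← Nat.cast_smul_eq_nsmul ℝ (B N * Lp)]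
    push_cast
    module
  -- limits
  have haN : Tendsto (fun N : ℕ => (A N : ℝ)/N) atTop (nhds θ) := ceil_div_tendsto θ hθ0
  have hbN : Tendsto (fun N : ℕ => (B N : ℝ)/N) atTop (nhds (1 - θ)) :=
    ceil_div_tendsto (1 - θ) (by linarith)
  have hTN : Tendsto (fun N : ℕ => T N / N) atTop (nhds ((Lp : ℝ) * Lq)) := by
    have : (fun N : ℕ => T N / N)
        = fun N : ℕ => ((A N : ℝ)/N) * Lq * Lp + ((B N : ℝ)/N) * Lp * Lq + L0 * (1/N) := by
      funext N
      rw [hlenW]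
      ring
    rw [this]
    have lim1 := (haN.mul_const (Lq:ℝ)).mul_const (Lp:ℝ)
    have lim2 := (hbN.mul_const (Lp:ℝ)).mul_const (Lq:ℝ)
    have lim3 := tendsto_one_div_atTop_nhds_zero_nat.const_mul L0
    have := (lim1.add lim2).add lim3
    convert this using 2
    ring
  have hLpLqne : (Lp : ℝ) * Lq ≠ 0 := by positivity
  have hαlim : Tendsto (fun N : ℕ => ((A N : ℝ)/N) * Lq * Lp / (T N / N)) atTop (nhds θ) := by
    have := ((haN.mul_const (Lq:ℝ)).mul_const (Lp:ℝ)).div hTN hLpLqne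
    convert this using 2
    rfl
    rw [mul_assoc, mul_comm (Lq:ℝ), mul_div_assoc, div_self hLpLqne, mul_one]
  have hβlim : Tendsto (fun N : ℕ => ((B N : ℝ)/N) * Lp * Lq / (T N / N)) atTop
      (nhds (1 - θ)) := by
    have := ((hbN.mul_const (Lp:ℝ)).mul_const (Lq:ℝ)).div hTN hLpLqne
    convert this using 2
    rfl
    rw [mul_assoc, mul_div_assoc, div_self hLpLqne, mul_one]
  have hγlim : Tendsto (fun N : ℕ => (1/(N:ℝ)) / (T N / N)) atTop (nhds 0) := by
    have := tendsto_one_div_atTop_nhds_zero_nat.div hTN hLpLqne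
    simpa [Pi.div_def] using this
  have hcombo : Tendsto (fun N : ℕ =>
      (((A N : ℝ)/N) * Lq * Lp / (T N / N)) • x + (((B N : ℝ)/N) * Lp * Lq / (T N / N)) • y
        + ((1/(N:ℝ)) / (T N / N)) • D) atTop (nhds (θ • x + (1 - θ) • y)) := by
    have := ((hαlim.smul_const x).add (hβlim.smul_const y)).add (hγlim.smul_const D)
    simpa using this
  -- identify with actual means
  have hev : ∀ᶠ N : ℕ in atTop,
      (((A N : ℝ)/N) * Lq * Lp / (T N / N)) • x + (((B N : ℝ)/N) * Lp * Lq / (T N / N)) • y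
        + ((1/(N:ℝ)) / (T N / N)) • D = ((Wc N).length : ℝ)⁻¹ • dS δ (Wc N) := by
    filter_upwards [eventually_ge_atTop 1] with N hN
    have hN0 : (0:ℝ) < N := by exact_mod_cast hN
    have hTN0 : (0:ℝ) < T N := hTpos N hN
    have e1 : ((A N : ℝ)/N) * Lq * Lp / (T N / N) = (A N : ℝ) * Lq * Lp / T N := by
      field_simp
    have e2 : ((B N : ℝ)/N) * Lp * Lq / (T N / N) = (B N : ℝ) * Lp * Lq / T N := by
      field_simp
    have e3 : (1/(N:ℝ)) / (T N / N) = (T N)⁻¹ := by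
      field_simp
    rw [e1, e2, e3, hdSW N]
    have hTr : ((Wc N).length : ℝ) = T N := rfl
    rw [hTr]
    simp only [div_eq_inv_mul]
    module
  have hfinal : Tendsto (fun N : ℕ => ((Wc N).length : ℝ)⁻¹ • dS δ (Wc N)) atTop
      (nhds (θ • x + (1 - θ) • y)) := hcombo.congr' hev
  apply mem_closure_of_tendsto hfinal
  filter_upwards [eventually_ge_atTop 1] with N hN
  exact mean_mem_WMeans δ (hWF N hN)

lemma closure_WMeans_convex (hconn : StronglyConnected s t) :
    Convex ℝ (closure (WMeans s t δ)) := by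
  intro x hx y hy a b ha hb hab
  have hb' : b = 1 - a := by linarith
  subst hb'
  have ha1 : a ≤ 1 := by linarith
  rw [Metric.mem_closure_iff]
  intro ε hε
  obtain ⟨x', hx', hxd⟩ := Metric.mem_closure_iff.1 hx (ε/4) (by linarith)
  obtain ⟨y', hy', hyd⟩ := Metric.mem_closure_iff.1 hy (ε/4) (by linarith)
  have hmem := binary_combo_mem_closure δ hconn hx' hy' ha ha1
  obtain ⟨z, hz, hzd⟩ := Metric.mem_closure_iff.1 hmem (ε/4) (by linarith)
  refine ⟨z, hz, ?_⟩
  have key : dist (a • x + (1-a) • y) (a • x' + (1-a) • y') ≤ ε/4 + ε/4 := by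
    have hsp : (a • x + (1-a) • y) - (a • x' + (1-a) • y') = a • (x - x') + (1-a) • (y - y') := by
      module
    rw [dist_eq_norm, hsp]
    have h1 : ‖a • (x - x')‖ = a * dist x x' := by
      rw [norm_smul, Real.norm_eq_abs, abs_of_nonneg ha, dist_eq_norm]
    have h2 : ‖(1-a) • (y - y')‖ = (1-a) * dist y y' := by
      rw [norm_smul, Real.norm_eq_abs, abs_of_nonneg (by linarith : (0:ℝ) ≤ 1-a), dist_eq_norm]
    calc ‖a • (x - x') + (1-a) • (y - y')‖ ≤ ‖a • (x - x')‖ + ‖(1-a) • (y - y')‖ :=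
          norm_add_le _ _
    _ = a * dist x x' + (1-a) * dist y y' := by rw [h1, h2]
    _ ≤ ε/4 + ε/4 := by
        have d1 : 0 ≤ dist x x' := dist_nonneg
        have d2 : 0 ≤ dist y y' := dist_nonneg
        nlinarith
  calc dist (a • x + (1-a) • y) z
      ≤ dist (a • x + (1-a) • y) (a • x' + (1-a) • y') + dist (a • x' + (1-a) • y') z :=
        dist_triangle _ _ _
  _ < (ε/4 + ε/4) + ε/4 := by linarith
  _ < ε := by linarith

lemma hull_subset_closure_WMeans (hconn : StronglyConnected s t) :
    convexHull ℝ (basicVelocities s t δ) ⊆ closure (WMeans s t δ) :=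
  convexHull_min (le_trans (basic_subset_WMeans δ) subset_closure)
    (closure_WMeans_convex δ hconn)

end DG


namespace DG

open Filter Finset

variable {d : ℕ} {V E : Type*} {s t : E → V} (δ : E → Fin d → ℤ)

lemma sum_Icc_shift {M : Type*} [AddCommMonoid M] (g : ℕ → M) (n : ℕ) :
    ∑ k ∈ Finset.Icc 1 n, g k = ∑ j ∈ Finset.range n, g (j+1) := by
  induction n with
  | zero => simp
  | succ m ih =>
      rw [Finset.sum_Icc_succ_top (by omega), ih, Finset.sum_range_succ]

lemma dS_take_eq_sum (l : List E) (e₀ : E) :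
    ∀ n, n ≤ l.length → dS δ (l.take n) = ∑ j ∈ Finset.range n, toR (δ (l.getD j e₀)) := by
  intro n
  induction n with
  | zero => simp
  | succ m ih =>
      intro hm
      have hmlt : m < l.length := by omega
      rw [List.take_succ, List.getElem?_eq_getElem hmlt]
      simp only [Option.toList_some]
      rw [dS_append, ih (by omega), Finset.sum_range_succ]
      rw [List.getD_eq_getElem l e₀ hmlt]
      simp

lemma prefix_take {X Y : List E} (h : X.IsPrefix Y) {n : ℕ} (hn : n ≤ X.length) :
    Y.take n = X.take n := by
  obtain ⟨Z, rfl⟩ := h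
  rw [List.take_append]
  have : n - X.length = 0 := by omega
  rw [this]
  simp

lemma prefix_getD {X Y : List E} (h : X.IsPrefix Y) {n : ℕ} (hn : n < X.length) (e₀ : E) :
    X.getD n e₀ = Y.getD n e₀ := by
  rw [List.getD_eq_getElem X e₀ hn,
    List.getD_eq_getElem Y e₀ (lt_of_lt_of_le hn h.length_le), h.getElem hn]

set_option maxHeartbeats 2000000 in
lemma closure_WMeans_subset_velocitySet [Fintype V] [Nonempty V]
    {C : ℝ} (hC : ∀ e : E, ‖toR (δ e)‖ ≤ C) (hC0 : 0 ≤ C)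
    (hconn : StronglyConnected s t) :
    closure (WMeans s t δ) ⊆ velocitySet s t δ := by
  intro u hu
  classical
  -- ‖u‖ ≤ C
  have huC : ‖u‖ ≤ C := by
    have hball : WMeans s t δ ⊆ Metric.closedBall 0 C := by
      rintro x ⟨a, p, hp, rfl⟩
      simpa [Metric.mem_closedBall, dist_zero_right] using norm_mean_le δ hC hp.ne_nil
    have := closure_minimal hball Metric.isClosed_closedBall hu
    simpa [Metric.mem_closedBall, dist_zero_right] using this
  -- choose approximating closed walks
  have hseq : ∀ k : ℕ, ∃ (a : V) (p : List E), WF s t a a p ∧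
      ‖(p.length : ℝ)⁻¹ • dS δ p - u‖ ≤ 1/((k:ℝ)+1) := by
    intro k
    have hpos : (0:ℝ) < 1/((k:ℝ)+1) := by positivity
    obtain ⟨mm, hm, hd⟩ := Metric.mem_closure_iff.1 hu _ hpos
    obtain ⟨a, p, hp, rfl⟩ := hm
    refine ⟨a, p, hp, ?_⟩
    rw [← dist_eq_norm, dist_comm]
    exact le_of_lt hd
  choose a p hWFp hmean using hseq
  have hpne : ∀ k, p k ≠ [] := fun k => (hWFp k).ne_nil
  -- connecting paths
  have hqex : ∀ k : ℕ, ∃ qq, WF s t (a k) (a (k+1)) qq := by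
    intro k
    obtain ⟨qq, hqq⟩ := hconn (a k) (a (k+1))
    exact ⟨qq, (pathFrom_iff_WF).1 hqq⟩
  choose q hWFq using hqex
  have hqne : ∀ k, q k ≠ [] := fun k => (hWFq k).ne_nil
  -- sizes
  set l : ℕ → ℕ := fun k => (p k).length with hldef
  set r : ℕ → ℕ := fun k => (q k).length with hrdef
  have hl1 : ∀ k, 1 ≤ l k := fun k => List.length_pos_iff.2 (hpne k)
  have hr1 : ∀ k, 1 ≤ r k := fun k => List.length_pos_iff.2 (hqne k)
  set σ : ℕ → ℕ := fun K => ∑ j ∈ Finset.range K, (l j + 2 * r j) with hσdef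
  set m : ℕ → ℕ := fun k => (k+2) * (σ (k+2) + 1) with hmdef
  have hm1 : ∀ k, 1 ≤ m k := by
    intro k
    rw [hmdef]
    have : 1 ≤ k + 2 := by omega
    exact Nat.one_le_iff_ne_zero.2 (Nat.mul_ne_zero (by omega) (by omega))
  set T : ℕ → ℕ := fun K => ∑ j ∈ Finset.range K, (m j * l j + r j) with hTdef
  have hT_mono : ∀ {K K' : ℕ}, K ≤ K' → T K ≤ T K' := by
    intro K K' h
    exact Finset.sum_le_sum_of_subset (Finset.range_subset_range.2 h)
  have hT_ge : ∀ K, K ≤ T K := by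
    intro K
    calc K = ∑ _j ∈ Finset.range K, 1 := by simp
    _ ≤ T K := Finset.sum_le_sum (fun j _ => by
        have := hm1 j
        have := hl1 j
        have := hr1 j
        nlinarith)
  have hT_lb : ∀ j : ℕ, (j+2) * σ (j+2) ≤ T (j+1) := by
    intro j
    have h1 : m j * l j + r j ≤ T (j+1) := by
      simp only [hTdef]
      rw [Finset.sum_range_succ]
      have : 0 ≤ ∑ jj ∈ Finset.range j, (m jj * l jj + r jj) := Nat.zero_le _
      omega
    have h2 : (j+2) * σ (j+2) ≤ m j := by
      rw [hmdef]
      nlinarith [Nat.zero_le (σ (j+2))]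
    have h3 : m j ≤ m j * l j := Nat.le_mul_of_pos_right _ (hl1 j)
    omega
  -- blocks
  set B : ℕ → List E := fun k => (List.replicate (m k) (p k)).flatten ++ q k with hBdef
  have hBlen : ∀ k, (B k).length = m k * l k + r k := by
    intro k
    rw [hBdef]
    simp [length_flatten_replicate]; rfl
  have hBWF : ∀ k, WF s t (a k) (a (k+1)) (B k) :=
    fun k => ((hWFp k).pow' (hm1 k)).append (hWFq k)
  set W : ℕ → List E := fun K => ((List.range K).map B).flatten with hWdef
  have hWsucc : ∀ K, W (K+1) = W K ++ B K := by
    intro K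
    rw [hWdef]
    simp [List.range_succ]
  have hWlen : ∀ K, (W K).length = T K := by
    intro K
    induction K with
    | zero => simp [hWdef, hTdef]
    | succ KK ih =>
        rw [hWsucc, List.length_append, ih, hBlen]
        simp only [hTdef]
        rw [Finset.sum_range_succ]
  have hWpre : ∀ {K K' : ℕ}, K ≤ K' → (W K).IsPrefix (W K') := by
    intro K K' h
    induction K' with
    | zero =>
        have : K = 0 := by omega
        subst this
        exact List.prefix_refl _
    | succ KK ih =>
        rcases Nat.eq_or_lt_of_le h with rfl | hlt
        · exact List.prefix_refl _
        · have := ih (by omega)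
          rw [hWsucc]
          exact this.trans (List.prefix_append _ _)
  have hWWF : ∀ K, 1 ≤ K → WF s t (a 0) (a K) (W K) := by
    intro K hK
    induction K with
    | zero => omega
    | succ KK ih =>
        rcases Nat.eq_zero_or_pos KK with rfl | hKK
        · have h1 : W 1 = B 0 := by
            rw [hWsucc]
            have : W 0 = [] := by simp [hWdef]
            rw [this, List.nil_append]
          rw [h1]
          exact hBWF 0
        · rw [hWsucc]
          exact (ih hKK).append (hBWF KK)
  -- initial edge
  obtain ⟨v0⟩ := (inferInstance : Nonempty V)
  obtain ⟨P0, hP0'⟩ := hconn v0 (a 0)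
  rw [pathFrom_iff_WF] at hP0'
  set e₀ := P0.getLast hP0'.ne_nil with he₀
  have hte₀ : t e₀ = a 0 := by
    have h := hP0'.2.2
    rw [List.getLast?_eq_getLast hP0'.ne_nil] at h
    simpa [he₀] using h
  -- the trajectory
  set f : ℕ → E := fun n => (e₀ :: W n).getD n e₀ with hfdef
  have hlenWn : ∀ n : ℕ, n ≤ (W n).length := fun n => (hWlen n) ▸ hT_ge n
  have hfstable : ∀ n K, n ≤ K → f n = (e₀ :: W K).getD n e₀ := by
    intro n K h
    rw [hfdef]
    apply prefix_getD ?_ ?_ e₀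
    · obtain ⟨Z, hZ⟩ := hWpre h
      exact ⟨Z, by rw [List.cons_append, hZ]⟩
    · simp only [List.length_cons]
      have := hlenWn n
      omega
  have hWchain : ∀ K, 1 ≤ K → (e₀ :: W K).Chain' (fun e f' => t e = s f') := by
    intro K hK
    rw [List.Chain', List.isChain_cons]
    constructor
    · intro y hy
      have hh := (hWWF K hK).2.1
      have hsy : s y = a 0 := by
        cases hhead : (W K).head? with
        | none => rw [hhead] at hy; simp at hy
        | some z =>
            rw [hhead] at hy hh
            simp at hy hh
            subst hy
            exact hh
      rw [hsy, hte₀]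
    · exact (hWWF K hK).1
  have htraj : IsTrajectory s t f := by
    intro n
    have h1 : f n = (e₀ :: W (n+2)).getD n e₀ := hfstable n (n+2) (by omega)
    have h2 : f (n+1) = (e₀ :: W (n+2)).getD (n+1) e₀ := hfstable (n+1) (n+2) (by omega)
    have hTn2 : n + 2 ≤ T (n+2) := hT_ge (n+2)
    have hlen : (e₀ :: W (n+2)).length = T (n+2) + 1 := by
      simp only [List.length_cons, hWlen]
    have hchain := hWchain (n+2) (by omega)
    rw [List.Chain', List.isChain_iff_getElem] at hchain
    have hkey := hchain n (by omega)
    rw [h1, h2, List.getD_eq_getElem _ _ (by omega), List.getD_eq_getElem _ _ (by omega)]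
    exact hkey.symm
  -- partial sums
  have hsum : ∀ n : ℕ, ∑ k ∈ Finset.Icc 1 n, toR (δ (f k)) = dS δ ((W n).take n) := by
    intro n
    rw [sum_Icc_shift, dS_take_eq_sum δ (W n) e₀ n (hlenWn n)]
    apply Finset.sum_congr rfl
    intro j hj
    rw [Finset.mem_range] at hj
    congr 2
    have := hfstable (j+1) n (by omega)
    rw [this, List.getD_cons_succ]
  -- tail segments of the block concatenation
  set WJs : ℕ → ℕ → List E := fun J K => (((List.range K).drop J).map B).flatten with hWJdef
  have hWJsucc : ∀ J K, J ≤ K → WJs J (K+1) = WJs J K ++ B K := by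
    intro J K h
    rw [hWJdef]
    simp only []
    rw [List.range_succ, List.drop_append_of_le_length (by simp; omega)]
    simp
  have hWsplit : ∀ J K, J ≤ K → W K = W J ++ WJs J K := by
    intro J K h
    rw [hWdef, hWJdef]
    simp only []
    rw [← List.flatten_append, ← List.map_append]
    congr 2
    have h1 : List.take J (List.range K) = List.range J := by
      rw [List.take_range]
      congr 1
      omega
    rw [← h1, List.take_append_drop]
  have hWJlen : ∀ J K, J ≤ K → (WJs J K).length = T K - T J := by
    intro J K h
    have h1 := hWsplit J K h
    have h2 : (W K).length = (W J).length + (WJs J K).length := by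
      rw [h1, List.length_append]
    rw [hWlen, hWlen] at h2
    have := hT_mono h
    omega
  -- sum positivity facts
  have hIco_nonneg : ∀ J K : ℕ, (0:ℝ) ≤ ∑ j ∈ Finset.Ico J K, (r j : ℝ) :=
    fun J K => Finset.sum_nonneg (fun j _ => by positivity)
  have hIco_nonneg2 : ∀ J K : ℕ, (0:ℝ) ≤ ∑ j ∈ Finset.Ico J K, ((l j : ℝ) + 2*(r j : ℝ)) :=
    fun J K => Finset.sum_nonneg (fun j _ => by positivity)
  have hIco_le : ∀ J K : ℕ, (∑ j ∈ Finset.Ico J K, (r j : ℝ))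
      ≤ ∑ j ∈ Finset.Ico J K, ((l j : ℝ) + 2*(r j : ℝ)) := by
    intro J K
    apply Finset.sum_le_sum
    intro j _
    have h1 : (0:ℝ) ≤ (l j : ℝ) := by positivity
    have h2 : (0:ℝ) ≤ (r j : ℝ) := by positivity
    linarith
  -- error accumulation over blocks J..K-1
  have herr : ∀ J K, J ≤ K → Err4 δ u (WJs J K)
      (2*C*(∑ j ∈ Finset.Ico J K, (r j : ℝ)))
      (2*C*(∑ j ∈ Finset.Ico J K, ((l j : ℝ) + 2*(r j : ℝ))))
      (1/((J:ℝ)+1)) := by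
    intro J K hJK
    induction K, hJK using Nat.le_induction with
    | base =>
        have hempty : WJs J J = [] := by
          have hdr : (List.range J).drop J = [] := List.drop_eq_nil_of_le (by simp)
          rw [hWJdef]
          simp only [hdr]
          simp
        rw [hempty]
        simp only [Finset.Ico_self, Finset.sum_empty, mul_zero]
        exact err4_nil δ u (by positivity)
    | succ K hJK ih =>
        rw [hWJsucc J K hJK]
        have hlK : (0:ℝ) ≤ (l K : ℝ) := by positivity
        have hrK : (0:ℝ) ≤ (r K : ℝ) := by positivity
        have hblock : Err4 δ u (B K) (2*C*(r K : ℝ))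
            (2*C*((l K : ℝ) + 2*(r K : ℝ))) (1/((J:ℝ)+1)) := by
          have h1 := err4_pow δ u hC hC0 huC (hpne K) (hmean K) (m K)
          have h2 := err4_base δ u hC hC0 huC (q K)
          have h3 := err4_append δ u h1 h2
          rw [hBdef]
          apply err4_mono δ u h3
          · rw [zero_add]
          · apply max_le
            · nlinarith
            · rw [zero_add]
              nlinarith
          · apply max_le
            · have hJK' : ((J:ℝ)+1) ≤ ((K:ℝ)+1) := by
                have : (J:ℝ) ≤ K := by exact_mod_cast hJK
                linarith
              exact one_div_le_one_div_of_le (by positivity) hJK'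
            · positivity
          · nlinarith
        have happ := err4_append δ u ih hblock
        apply err4_mono δ u happ
        · rw [Finset.sum_Ico_succ_top hJK]
          apply le_of_eq
          ring
        · apply max_le
          · rw [Finset.sum_Ico_succ_top hJK]
            nlinarith [hIco_nonneg2 J K]
          · rw [Finset.sum_Ico_succ_top hJK]
            have := hIco_le J K
            nlinarith
        · apply max_le le_rfl le_rfl
        · rw [Finset.sum_Ico_succ_top hJK, Finset.sum_Ico_succ_top hJK]
          have := hIco_le J K
          nlinarith
  -- conclude
  refine ⟨f, htraj, ?_⟩
  rw [HasVelocity, Metric.tendsto_atTop]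
  intro ε hε
  obtain ⟨J, hJ⟩ := exists_nat_one_div_lt (show (0:ℝ) < ε/4 by linarith)
  set K₀ : ℕ := max (J+2) (⌈8*C/ε⌉₊ + 1) with hK₀
  have htend : Tendsto (fun n : ℕ => 2*C*((T J : ℝ)+1)/n) atTop (nhds 0) :=
    tendsto_const_div_atTop_nhds_zero_nat _
  have hev : ∀ᶠ n : ℕ in atTop, 2*C*((T J : ℝ)+1)/n < ε/4 :=
    (tendsto_order.1 htend).2 _ (by positivity)
  obtain ⟨N₁, hN₁⟩ := eventually_atTop.1 hev
  refine ⟨max N₁ (T K₀ + 1), ?_⟩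
  intro n hn
  have hnN₁ : N₁ ≤ n := le_trans (le_max_left _ _) hn
  have hnK₀ : T K₀ + 1 ≤ n := le_trans (le_max_right _ _) hn
  have hn1 : 1 ≤ n := by omega
  have hnR : (0:ℝ) < n := by exact_mod_cast hn1
  -- the block index containing time n
  have hex : ∃ KK, n ≤ T KK := ⟨n, hT_ge n⟩
  set K := Nat.find hex with hKdef
  have hKspec : n ≤ T K := Nat.find_spec hex
  have hK0lt : K₀ < K := by
    by_contra h
    push_neg at h
    have := hT_mono h
    omega
  have hK2 : 2 ≤ K := by
    have : 2 ≤ K₀ := le_trans (by omega) (le_max_left _ _)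
    omega
  have hTK1 : T (K-1) < n := by
    have := Nat.find_min hex (show K - 1 < K by omega)
    omega
  have hJK : J ≤ K := by
    have : J + 2 ≤ K₀ := le_max_left _ _
    omega
  have hJK1 : J ≤ K - 1 := by
    have : J + 2 ≤ K₀ := le_max_left _ _
    omega
  have hnTJ : T J ≤ n := by
    have h1 : T J ≤ T (K-1) := hT_mono hJK1
    omega
  set mrem := n - T J with hmremdef
  have hmcast : (mrem : ℝ) = (n:ℝ) - (T J : ℝ) := by
    rw [hmremdef]
    push_cast [Nat.cast_sub hnTJ]
    ring
  -- rewrite the partial sum list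
  have htake1 : (W n).take n = (W K).take n := by
    rcases le_total n K with h | h
    · exact (prefix_take (hWpre h) (hlenWn n)).symm
    · exact prefix_take (hWpre h) (by rw [hWlen]; exact hKspec)
  have htake2 : (W K).take n = W J ++ (WJs J K).take mrem := by
    rw [hWsplit J K hJK, List.take_append]
    congr 1
    · exact List.take_of_length_le (by rw [hWlen]; exact hnTJ)
    · congr 1
      rw [hWlen]
  -- error bounds
  have hbound1 : ‖dS δ (W J) - (T J : ℝ) • u‖ ≤ 2*C*(T J : ℝ) := by
    have h := err4_partial_bound δ u hC huC (W J) (le_refl (W J).length)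
    rw [List.take_length] at h
    rw [hWlen] at h
    exact h
  have hmlen : mrem ≤ (WJs J K).length := by
    rw [hWJlen J K hJK]
    omega
  obtain ⟨_, _, _, hpart, _⟩ := herr J K hJK
  have hbound2 := hpart mrem hmlen
  -- combine
  have hXsplit : dS δ ((W n).take n) - (n:ℝ) • u
      = (dS δ (W J) - (T J : ℝ) • u) + (dS δ ((WJs J K).take mrem) - (mrem : ℝ) • u) := by
    rw [htake1, htake2, dS_append]
    have hncast : (n:ℝ) = (T J : ℝ) + (mrem : ℝ) := by rw [hmcast]; ring
    rw [hncast]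
    module
  set SS : ℝ := ∑ j ∈ Finset.Ico J K, ((l j : ℝ) + 2*(r j : ℝ)) with hSS
  have hX : ‖dS δ ((W n).take n) - (n:ℝ) • u‖
      ≤ 2*C*(T J : ℝ) + (2*C*SS + (mrem:ℝ) * (1/((J:ℝ)+1))) := by
    rw [hXsplit]
    calc ‖_ + _‖ ≤ ‖dS δ (W J) - (T J : ℝ) • u‖
          + ‖dS δ ((WJs J K).take mrem) - (mrem : ℝ) • u‖ := norm_add_le _ _
    _ ≤ 2*C*(T J : ℝ) + (2*C*SS + (mrem:ℝ) * (1/((J:ℝ)+1))) := add_le_add hbound1 hbound2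
  -- numeric bounds
  have hterm1 : 2*C*(T J : ℝ)/n < ε/4 := by
    have h := hN₁ n hnN₁
    have h2 : 2*C*(T J : ℝ)/n ≤ 2*C*((T J : ℝ)+1)/n := by
      rw [div_le_div_iff_of_pos_right hnR]
      have : (0:ℝ) ≤ (T J : ℝ) := by positivity
      linarith
    linarith
  have hσcast : SS ≤ (σ K : ℝ) := by
    rw [hSS, hσdef]
    push_cast
    apply Finset.sum_le_sum_of_subset_of_nonneg
    · intro j hj
      rw [Finset.mem_Ico] at hj
      rw [Finset.mem_range]
      omega
    · intro j _ _
      positivity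
  have hKσ : (K:ℝ) * (σ K : ℝ) ≤ (n:ℝ) := by
    have h2 : K - 2 + 2 = K := by omega
    have h3 : K - 2 + 1 = K - 1 := by omega
    have h4 := hT_lb (K-2)
    rw [h2, h3] at h4
    have h5 : K * σ K ≤ n := by omega
    exact_mod_cast h5
  have hKR : (0:ℝ) < K := by
    have : (0:ℕ) < K := by omega
    exact_mod_cast this
  have hterm2 : 2*C*SS/n < ε/4 := by
    have hceil : (8*C/ε : ℝ) ≤ (⌈8*C/ε⌉₊ : ℝ) := Nat.le_ceil _
    have hKbig : 8*C/ε < (K:ℝ) := by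
      have h1 : (⌈8*C/ε⌉₊ + 1 : ℕ) ≤ K₀ := le_max_right _ _
      have h2 : ((⌈8*C/ε⌉₊ + 1 : ℕ) : ℝ) ≤ (K₀ : ℝ) := by exact_mod_cast h1
      have h3 : (K₀ : ℝ) < K := by exact_mod_cast hK0lt
      push_cast at h2
      linarith
    have h8C : 8*C < ε * K := by
      rw [div_lt_iff₀ hε] at hKbig
      linarith
    -- SS ≤ n / K
    have hSn : SS * K ≤ (n:ℝ) := by
      calc SS * K ≤ (σ K : ℝ) * K := by nlinarith [hIco_nonneg2 J K]
      _ = (K:ℝ) * (σ K : ℝ) := by ring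
      _ ≤ n := hKσ
    rw [div_lt_iff₀ hnR]
    nlinarith [hIco_nonneg2 J K]
  have hterm3 : ((mrem:ℝ)/n) * (1/((J:ℝ)+1)) < ε/4 := by
    have hm_le : (mrem:ℝ) ≤ n := by
      rw [hmcast]
      have : (0:ℝ) ≤ (T J : ℝ) := by positivity
      linarith
    have hfrac : (mrem:ℝ)/n ≤ 1 := by
      rw [div_le_one hnR]
      exact hm_le
    have hpos : (0:ℝ) ≤ (mrem:ℝ)/n := by positivity
    have hJpos : (0:ℝ) < 1/((J:ℝ)+1) := by positivity
    nlinarith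
  -- final computation
  have havg : dist ((n : ℝ)⁻¹ • ∑ k ∈ Finset.Icc 1 n, toR (δ (f k))) u
      = (n:ℝ)⁻¹ * ‖dS δ ((W n).take n) - (n:ℝ) • u‖ := by
    rw [hsum n, dist_eq_norm]
    have hid : (n:ℝ)⁻¹ • dS δ ((W n).take n) - u
        = (n:ℝ)⁻¹ • (dS δ ((W n).take n) - (n:ℝ) • u) := by
      rw [smul_sub, smul_smul, inv_mul_cancel₀ (ne_of_gt hnR), one_smul]
    rw [hid, norm_smul, Real.norm_eq_abs, abs_of_pos (inv_pos.2 hnR)]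
  rw [havg]
  have hfinal : (n:ℝ)⁻¹ * ‖dS δ ((W n).take n) - (n:ℝ) • u‖
      ≤ 2*C*(T J : ℝ)/n + 2*C*SS/n + ((mrem:ℝ)/n) * (1/((J:ℝ)+1)) := by
    have h1 := hX
    have h2 : (0:ℝ) < (n:ℝ)⁻¹ := inv_pos.2 hnR
    calc (n:ℝ)⁻¹ * ‖dS δ ((W n).take n) - (n:ℝ) • u‖
        ≤ (n:ℝ)⁻¹ * (2*C*(T J : ℝ) + (2*C*SS + (mrem:ℝ) * (1/((J:ℝ)+1)))) :=
          mul_le_mul_of_nonneg_left h1 (le_of_lt h2)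
    _ = 2*C*(T J : ℝ)/n + 2*C*SS/n + ((mrem:ℝ)/n) * (1/((J:ℝ)+1)) := by
        field_simp
        ring
  linarith

end DG

/-- Main theorem: if `G` is strongly connected, then the set of all velocities
of trajectories equals the convex hull of the set of basic velocities. -/

theorem stmt11 {d : ℕ} (hd : 1 ≤ d) {V E : Type*} [Fintype V] [Nonempty V] [Fintype E]
    (s t : E → V) (δ : E → Fin d → ℤ) (hconn : StronglyConnected s t) :
    velocitySet s t δ = convexHull ℝ (basicVelocities s t δ) := by
  obtain ⟨C, hC0, hC⟩ : ∃ C : ℝ, 0 ≤ C ∧ ∀ e : E, ‖toR (δ e)‖ ≤ C := by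
    rcases isEmpty_or_nonempty E with h | h
    · exact ⟨0, le_refl 0, fun e => (h.elim e)⟩
    · obtain ⟨x, hx⟩ := Finite.exists_max (fun e : E => ‖toR (δ e)‖)
      exact ⟨max 0 ‖toR (δ x)‖, le_max_left _ _,
        fun e => le_trans (hx e) (le_max_right _ _)⟩
  apply le_antisymm
  · exact DG.velocitySet_subset_hull δ hC hC0 hconn
  · exact le_trans (DG.hull_subset_closure_WMeans δ hconn)
      (DG.closure_WMeans_subset_velocitySet δ hC hC0 hconn)
end

section
/- Existence of the large-scale norm: let (G, δ) be a displacement graph in dimension d, let G̃ be its associated periodic graph, and suppose G̃ is strongly connected. Let D(a, b) ∈ ℕ denote the length of a shortest path in G̃ from vertex a to vertex b (with D(a, a) = 0). Then for every x ∈ ℤ^d and every vertex a of G̃, the limit lim_{n→∞} D(a, a + n·x)/n exists in ℝ, and its value does not depend on the choice of vertex a. -/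
/-- Source map of the periodic graph `G̃` associated to a displacement graph. -/
def sTil {d : ℕ} {V E : Type*} (s : E → V) (_δ : E → Fin d → ℤ) :
    E × (Fin d → ℤ) → V × (Fin d → ℤ) :=
  fun e => (s e.1, e.2)

/-- Target map of the periodic graph `G̃` associated to a displacement graph. -/
def tTil {d : ℕ} {V E : Type*} (t : E → V) (δ : E → Fin d → ℤ) :
    E × (Fin d → ℤ) → V × (Fin d → ℤ) :=
  fun e => (t e.1, e.2 + δ e.1)

/-- Length of a shortest path from `a` to `b` (with `graphDist a a = 0`). -/
noncomputable def graphDist {V E : Type*} (s t : E → V) (a b : V) : ℕ :=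
  sInf {n : ℕ | (a = b ∧ n = 0) ∨ ∃ p : List E, PathFrom s t a b p ∧ p.length = n}

section Aux

variable {d : ℕ} {V E : Type*} (s t : E → V) (δ : E → Fin d → ℤ)

lemma pathFrom_append {a b c : V} {p q : List E}
    (hp : PathFrom s t a b p) (hq : PathFrom s t b c q) :
    PathFrom s t a c (p ++ q) := by
  obtain ⟨hpne, hpc, hph, hpl⟩ := hp
  obtain ⟨hqne, hqc, hqh, hql⟩ := hq
  have hne : p ++ q ≠ [] := by simp [hpne]
  refine ⟨hne, ?_, ?_, ?_⟩
  · unfold List.Chain' at *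
    rw [List.isChain_append]
    refine ⟨hpc, hqc, ?_⟩
    intro e he f hf
    rw [List.getLast?_eq_getLast hpne, Option.mem_some_iff] at he
    rw [List.head?_eq_head hqne, Option.mem_some_iff] at hf
    rw [← he, ← hf] at *
    rw [hpl, ← hqh]
  · rw [List.head_append_left hpne]; exact hph
  · rw [List.getLast_append_of_right_ne_nil p q hqne]; exact hql

lemma pathFrom_translate (z : Fin d → ℤ) {a b : V × (Fin d → ℤ)}
    {p : List (E × (Fin d → ℤ))}
    (hp : PathFrom (sTil s δ) (tTil t δ) a b p) :
    PathFrom (sTil s δ) (tTil t δ) (a.1, a.2 + z) (b.1, b.2 + z)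
      (p.map (fun e => (e.1, e.2 + z))) := by
  obtain ⟨hne, hchain, hhead, hlast⟩ := hp
  have hne' : p.map (fun e : E × (Fin d → ℤ) => (e.1, e.2 + z)) ≠ [] := by simpa using hne
  refine ⟨hne', ?_, ?_, ?_⟩
  · unfold List.Chain' at *
    rw [List.isChain_map]
    refine hchain.imp ?_
    intro e f h
    simp only [sTil, tTil, Prod.mk.injEq] at h ⊢
    exact ⟨h.1, by rw [← h.2]; abel⟩
  · rw [List.head_map]
    simp only [sTil, Prod.ext_iff] at hhead ⊢
    exact ⟨hhead.1, by rw [hhead.2]⟩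
  · rw [List.getLast_map]
    simp only [tTil, Prod.ext_iff] at hlast ⊢
    refine ⟨hlast.1, ?_⟩
    rw [← hlast.2]; abel

variable (hconn : ∀ a b : V × (Fin d → ℤ), a ≠ b →
    ∃ p : List (E × (Fin d → ℤ)), PathFrom (sTil s δ) (tTil t δ) a b p)

lemma graphDist_le_of_path {a b : V × (Fin d → ℤ)} {p : List (E × (Fin d → ℤ))}
    (hp : PathFrom (sTil s δ) (tTil t δ) a b p) :
    graphDist (sTil s δ) (tTil t δ) a b ≤ p.length :=
  Nat.sInf_le (Or.inr ⟨p, hp, rfl⟩)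

lemma graphDist_self (a : V × (Fin d → ℤ)) :
    graphDist (sTil s δ) (tTil t δ) a a = 0 :=
  Nat.le_zero.mp (Nat.sInf_le (Or.inl ⟨rfl, rfl⟩))

include hconn in
lemma graphDist_mem (a b : V × (Fin d → ℤ)) :
    (a = b ∧ graphDist (sTil s δ) (tTil t δ) a b = 0) ∨
      ∃ p : List (E × (Fin d → ℤ)), PathFrom (sTil s δ) (tTil t δ) a b p ∧
        p.length = graphDist (sTil s δ) (tTil t δ) a b := by
  have hne : {n : ℕ | (a = b ∧ n = 0) ∨
      ∃ p : List (E × (Fin d → ℤ)), PathFrom (sTil s δ) (tTil t δ) a b p ∧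
        p.length = n}.Nonempty := by
    by_cases h : a = b
    · exact ⟨0, Or.inl ⟨h, rfl⟩⟩
    · obtain ⟨p, hp⟩ := hconn a b h
      exact ⟨p.length, Or.inr ⟨p, hp, rfl⟩⟩
  exact Nat.sInf_mem hne

include hconn in
lemma graphDist_translate_le (z : Fin d → ℤ) (a b : V × (Fin d → ℤ)) :
    graphDist (sTil s δ) (tTil t δ) (a.1, a.2 + z) (b.1, b.2 + z) ≤
      graphDist (sTil s δ) (tTil t δ) a b := by
  rcases graphDist_mem s t δ hconn a b with ⟨hab, h0⟩ | ⟨p, hp, hlen⟩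
  · subst hab
    rw [graphDist_self]
    exact Nat.zero_le _
  · calc graphDist (sTil s δ) (tTil t δ) (a.1, a.2 + z) (b.1, b.2 + z)
        ≤ (p.map (fun e : E × (Fin d → ℤ) => (e.1, e.2 + z))).length :=
          graphDist_le_of_path s t δ (pathFrom_translate s t δ z hp)
      _ = p.length := List.length_map _
      _ = _ := hlen

include hconn in
lemma graphDist_translate (z : Fin d → ℤ) (a b : V × (Fin d → ℤ)) :
    graphDist (sTil s δ) (tTil t δ) (a.1, a.2 + z) (b.1, b.2 + z) =
      graphDist (sTil s δ) (tTil t δ) a b := by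
  refine le_antisymm (graphDist_translate_le s t δ hconn z a b) ?_
  have := graphDist_translate_le s t δ hconn (-z) (a.1, a.2 + z) (b.1, b.2 + z)
  simpa using this

include hconn in
lemma graphDist_triangle (a b c : V × (Fin d → ℤ)) :
    graphDist (sTil s δ) (tTil t δ) a c ≤
      graphDist (sTil s δ) (tTil t δ) a b + graphDist (sTil s δ) (tTil t δ) b c := by
  rcases graphDist_mem s t δ hconn a b with ⟨hab, h0⟩ | ⟨p, hp, hlenp⟩
  · subst hab; simp [graphDist_self]
  rcases graphDist_mem s t δ hconn b c with ⟨hbc, h0⟩ | ⟨q, hq, hlenq⟩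
  · subst hbc; simp [graphDist_self]
  calc graphDist (sTil s δ) (tTil t δ) a c ≤ (p ++ q).length :=
        graphDist_le_of_path s t δ (pathFrom_append (sTil s δ) (tTil t δ) hp hq)
    _ = p.length + q.length := List.length_append
    _ = _ := by rw [hlenp, hlenq]

end Aux

/-- Existence of the large-scale norm: if the periodic graph `G̃` associated to
`(G, δ)` is strongly connected, then for every `x ∈ ℤ^d` the limit
`lim_{n→∞} D(a, a + n·x)/n` exists and does not depend on the vertex `a`. -/
theorem stmt13 {d : ℕ} (hd : 1 ≤ d) {V E : Type*} [Fintype V] [Nonempty V] [Fintype E]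
    (s t : E → V) (δ : E → Fin d → ℤ)
    (hconn : ∀ a b : V × (Fin d → ℤ), a ≠ b →
      ∃ p : List (E × (Fin d → ℤ)), PathFrom (sTil s δ) (tTil t δ) a b p)
    (x : Fin d → ℤ) :
    ∃ L : ℝ, ∀ a : V × (Fin d → ℤ),
      Filter.Tendsto
        (fun n : ℕ => (graphDist (sTil s δ) (tTil t δ) a (a.1, a.2 + n • x) : ℝ) / n)
        Filter.atTop (nhds L) := by
  classical
  set D := graphDist (sTil s δ) (tTil t δ) with hDdef
  have htrans := graphDist_translate s t δ hconn
  have htri := graphDist_triangle s t δ hconn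
  simp only [← hDdef] at htrans htri
  -- the translated distance along the orbit
  have hshift : ∀ (v : V) (m n : ℕ),
      D (v, m • x) (v, (m + n) • x) = D (v, (0 : Fin d → ℤ)) (v, n • x) := by
    intro v m n
    have h := htrans (m • x) (v, (0 : Fin d → ℤ)) (v, n • x)
    rw [zero_add, add_comm (n • x) (m • x), ← add_nsmul] at h
    exact h
  -- subadditivity
  have hsub : ∀ v : V, Subadditive (fun n : ℕ => (D (v, 0) (v, n • x) : ℝ)) := by
    intro v m n
    have key : D (v, (0 : Fin d → ℤ)) (v, (m + n) • x) ≤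
        D (v, 0) (v, m • x) + D (v, 0) (v, n • x) := by
      have h := htri (v, (0 : Fin d → ℤ)) (v, m • x) (v, (m + n) • x)
      rw [hshift v m n] at h
      exact h
    dsimp only
    exact_mod_cast key
  have hbdd : ∀ v : V, BddBelow (Set.range fun n : ℕ => (D (v, 0) (v, n • x) : ℝ) / n) := by
    intro v
    refine ⟨0, ?_⟩
    rintro y ⟨n, rfl⟩
    positivity
  set v₀ : V := Classical.arbitrary V with hv₀
  refine ⟨(hsub v₀).lim, ?_⟩
  have hlim0 : Filter.Tendsto (fun n : ℕ => (D (v₀, 0) (v₀, n • x) : ℝ) / n)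
      Filter.atTop (nhds ((hsub v₀).lim)) := (hsub v₀).tendsto_lim (hbdd v₀)
  -- every vertex has the same limit
  have hcomp : ∀ v : V, Filter.Tendsto (fun n : ℕ => (D (v, 0) (v, n • x) : ℝ) / n)
      Filter.atTop (nhds ((hsub v₀).lim)) := by
    intro v
    set C : ℝ := (D (v, 0) (v₀, 0) : ℝ) + (D (v₀, 0) (v, 0) : ℝ) with hC
    have e1 : ∀ n : ℕ, D (v₀, n • x) (v, n • x) = D (v₀, 0) (v, 0) := by
      intro n
      have h := htrans (n • x) (v₀, (0 : Fin d → ℤ)) (v, (0 : Fin d → ℤ))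
      simpa using h
    have e2 : ∀ n : ℕ, D (v, n • x) (v₀, n • x) = D (v, 0) (v₀, 0) := by
      intro n
      have h := htrans (n • x) (v, (0 : Fin d → ℤ)) (v₀, (0 : Fin d → ℤ))
      simpa using h
    have hub : ∀ n : ℕ,
        |(D (v, 0) (v, n • x) : ℝ) - (D (v₀, 0) (v₀, n • x) : ℝ)| ≤ C := by
      intro n
      have h1 : D (v, 0) (v, n • x) ≤
          D (v, 0) (v₀, 0) + (D (v₀, 0) (v₀, n • x) + D (v₀, 0) (v, 0)) := by
        calc D (v, (0 : Fin d → ℤ)) (v, n • x)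
            ≤ D (v, 0) (v₀, 0) + D (v₀, 0) (v, n • x) := htri _ _ _
          _ ≤ D (v, 0) (v₀, 0) + (D (v₀, 0) (v₀, n • x) + D (v₀, n • x) (v, n • x)) :=
              Nat.add_le_add_left (htri _ _ _) _
          _ = _ := by rw [e1 n]
      have h2 : D (v₀, 0) (v₀, n • x) ≤
          D (v₀, 0) (v, 0) + (D (v, 0) (v, n • x) + D (v, 0) (v₀, 0)) := by
        calc D (v₀, (0 : Fin d → ℤ)) (v₀, n • x)
            ≤ D (v₀, 0) (v, 0) + D (v, 0) (v₀, n • x) := htri _ _ _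
          _ ≤ D (v₀, 0) (v, 0) + (D (v, 0) (v, n • x) + D (v, n • x) (v₀, n • x)) :=
              Nat.add_le_add_left (htri _ _ _) _
          _ = _ := by rw [e2 n]
      rw [abs_sub_le_iff, hC]
      constructor
      · push_cast
        have := (Nat.cast_le (α := ℝ)).2 h1
        push_cast at this
        linarith
      · push_cast
        have := (Nat.cast_le (α := ℝ)).2 h2
        push_cast at this
        linarith
    have hzero : Filter.Tendsto
        (fun n : ℕ => ((D (v, 0) (v, n • x) : ℝ) - (D (v₀, 0) (v₀, n • x) : ℝ)) / n)
        Filter.atTop (nhds 0) := by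
      have hCnn : 0 ≤ C := by rw [hC]; positivity
      refine squeeze_zero_norm (fun n => ?_) (tendsto_const_div_atTop_nhds_zero_nat C)
      rw [Real.norm_eq_abs, abs_div, Nat.abs_cast]
      gcongr
      exact hub n
    have hadd := hlim0.add hzero
    rw [add_zero] at hadd
    refine hadd.congr fun n => ?_
    rcases Nat.eq_zero_or_pos n with rfl | hn
    · simp
    · have hn' : (n : ℝ) ≠ 0 := by exact_mod_cast hn.ne'
      field_simp
      ring
  intro a
  have heq : ∀ n : ℕ, D a (a.1, a.2 + n • x) = D (a.1, 0) (a.1, n • x) := by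
    intro n
    have h := htrans a.2 (a.1, (0 : Fin d → ℤ)) (a.1, n • x)
    simpa [add_comm] using h
  refine (hcomp a.1).congr fun n => ?_
  rw [heq n]
end

section
/- Every rational polytope is a velocity polytope: for every nonempty finite set W ⊆ ℚ^d, there exists a displacement graph (G, δ) in dimension d which is strongly connected and whose velocity polytope (the convex hull in ℝ^d of its basic velocities) equals the convex hull in ℝ^d of W. -/
/-- Regard a vector of `ℚ^d` as a point of Euclidean space `ℝ^d`. -/
def toRQ {d : ℕ} (x : Fin d → ℚ) : EuclideanSpace ℝ (Fin d) := WithLp.toLp 2 (fun i => (x i : ℝ))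

namespace Stmt15Aux

/-- `a % N` for `a < 2N`. -/
lemma mod_small {a N : ℕ} (hN : 0 < N) (h : a < 2 * N) :
    a % N = if a < N then a else a - N := by
  split
  · exact Nat.mod_eq_of_lt ‹_›
  · rw [Nat.mod_eq_sub_mod (le_of_not_gt ‹_›), Nat.mod_eq_of_lt (by omega)]

variable {d : ℕ}

def src (N K : ℕ) (hN : 0 < N) (j : Fin (K + (N - 1))) : Fin N :=
  if h : (j : ℕ) < K then ⟨0, hN⟩
  else ⟨(j : ℕ) - K + 1, by have := j.isLt; omega⟩

def tgt (N K : ℕ) (hN : 0 < N) (j : Fin (K + (N - 1))) : Fin N :=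
  ⟨((src N K hN j : ℕ) + 1) % N, Nat.mod_lt _ hN⟩

def disp (N K : ℕ) (zv : Fin K → Fin d → ℤ) (j : Fin (K + (N - 1))) : Fin d → ℤ :=
  if h : (j : ℕ) < K then zv ⟨(j : ℕ), h⟩ else 0

lemma src_val_lt {N K : ℕ} (hN : 0 < N) (j : Fin (K + (N - 1))) (h : ¬ (j : ℕ) < K) :
    (src N K hN j : ℕ) = (j : ℕ) - K + 1 := by
  simp [src, h]

lemma src_val_zero {N K : ℕ} (hN : 0 < N) (j : Fin (K + (N - 1))) (h : (j : ℕ) < K) :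
    (src N K hN j : ℕ) = 0 := by
  simp [src, h]

lemma src_eq_zero_iff {N K : ℕ} (hN : 0 < N) (j : Fin (K + (N - 1))) :
    (src N K hN j : ℕ) = 0 ↔ (j : ℕ) < K := by
  by_cases h : (j : ℕ) < K
  · simp [src_val_zero hN j h, h]
  · simp [src_val_lt hN j h, h]

lemma disp_eq_zero {N K : ℕ} (zv : Fin K → Fin d → ℤ) (j : Fin (K + (N - 1)))
    (h : ¬ (j : ℕ) < K) : disp N K zv j = 0 := by
  simp [disp, h]

def edgeFrom (N K : ℕ) (j0 : Fin K) (u : ℕ) (hu : u < N) : Fin (K + (N - 1)) :=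
  if h : u = 0 then ⟨(j0 : ℕ), by have := j0.isLt; omega⟩
  else ⟨K + u - 1, by omega⟩

lemma src_edgeFrom {N K : ℕ} (hN : 0 < N) (j0 : Fin K) (u : ℕ) (hu : u < N) :
    (src N K hN (edgeFrom N K j0 u hu) : ℕ) = u := by
  by_cases h : u = 0
  · subst h
    have : ((edgeFrom N K j0 0 hu : Fin (K + (N-1))) : ℕ) = (j0 : ℕ) := by simp [edgeFrom]
    rw [src_val_zero hN _ (by rw [this]; exact j0.isLt)]
  · have hval : ((edgeFrom N K j0 u hu : Fin (K + (N-1))) : ℕ) = K + u - 1 := by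
      simp [edgeFrom, h]
    rw [src_val_lt hN _ (by omega)]
    omega

lemma tgt_val {N K : ℕ} (hN : 0 < N) (j : Fin (K + (N - 1))) :
    (tgt N K hN j : ℕ) = ((src N K hN j : ℕ) + 1) % N := rfl

lemma disp_edgeFrom {N K : ℕ} (zv : Fin K → Fin d → ℤ) (j0 : Fin K) (u : ℕ) (hu : u < N) :
    disp N K zv (edgeFrom N K j0 u hu) = if u = 0 then zv j0 else 0 := by
  by_cases h : u = 0
  · subst h
    simp only [edgeFrom, if_pos rfl, disp, if_pos rfl]
    simp [dif_pos j0.isLt]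
  · have hval : ((edgeFrom N K j0 u hu : Fin (K + (N-1))) : ℕ) = K + u - 1 := by
      simp [edgeFrom, h]
    rw [if_neg h, disp, dif_neg (by omega)]

/-- Vertex progression along a path. -/
lemma chain_src {N K : ℕ} (hN : 0 < N) {p : List (Fin (K + (N - 1)))}
    (hp : p.Chain' (fun e f => tgt N K hN e = src N K hN f))
    (i : ℕ) (hi : i < p.length) (h0 : 0 < p.length) :
    (src N K hN (p.get ⟨i, hi⟩) : ℕ) = ((src N K hN (p.get ⟨0, h0⟩) : ℕ) + i) % N := by
  induction i with
  | zero => rw [Nat.add_zero, Nat.mod_eq_of_lt (src N K hN (p.get ⟨0, h0⟩)).isLt]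
  | succ i ih =>
    have hcl := (List.isChain_iff_getElem.mp hp) i (by omega)
    have h1 : (src N K hN (p.get ⟨i + 1, hi⟩) : ℕ)
        = (tgt N K hN (p.get ⟨i, by omega⟩) : ℕ) := congrArg Fin.val hcl.symm
    rw [h1, tgt_val, ih (by omega), Nat.mod_add_mod, Nat.add_assoc]

end Stmt15Aux

namespace Stmt15Aux

lemma cycle_structure {d N K : ℕ} (hN : 0 < N) (zv : Fin K → Fin d → ℤ)
    {c : List (Fin (K + (N - 1)))}
    (hc : ∃ h : c ≠ [], c.Chain' (fun e f => tgt N K hN e = src N K hN f) ∧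
      src N K hN (c.head h) = tgt N K hN (c.getLast h) ∧
      (c.map (src N K hN)).Nodup) :
    ∃ j0 : Fin K, c.length = N ∧ (c.map (disp N K zv)).sum = zv j0 := by
  obtain ⟨hne, hch, hclose, hnd⟩ := hc
  have h0 : 0 < c.length := List.length_pos_iff.mpr hne
  set n := c.length with hn
  set v0 : ℕ := (src N K hN (c.get ⟨0, h0⟩) : ℕ) with hv0
  have hv0lt : v0 < N := (src N K hN (c.get ⟨0, h0⟩)).isLt
  have hsrc : ∀ (i : ℕ) (hi : i < n), (src N K hN (c.get ⟨i, hi⟩) : ℕ) = (v0 + i) % N :=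
    fun i hi => chain_src hN hch i hi h0
  -- injectivity of i ↦ src c[i]
  have hinj : ∀ (i₁ i₂ : ℕ) (h₁ : i₁ < n) (h₂ : i₂ < n),
      src N K hN (c.get ⟨i₁, h₁⟩) = src N K hN (c.get ⟨i₂, h₂⟩) → i₁ = i₂ := by
    intro i₁ i₂ h₁ h₂ heq
    have hinj' := List.nodup_iff_injective_get.mp hnd
    have e1 : (c.map (src N K hN)).get ⟨i₁, by simpa using h₁⟩
        = (c.map (src N K hN)).get ⟨i₂, by simpa using h₂⟩ := by
      simp only [List.get_eq_getElem, List.getElem_map]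
      exact heq
    have := hinj' e1
    simpa using this
  -- length ≤ N
  have hle : n ≤ N := by
    by_contra hgt
    push_neg at hgt
    have h1 : src N K hN (c.get ⟨0, h0⟩) = src N K hN (c.get ⟨N, by omega⟩) := by
      apply Fin.val_injective
      rw [hsrc 0 h0, hsrc N (by omega), Nat.add_zero, Nat.add_mod_right]
    have := hinj 0 N h0 (by omega) h1
    omega
  -- closing: n = N
  have hhead : c.head hne = c.get ⟨0, h0⟩ := by
    rw [List.head_eq_getElem]; rfl
  have hlast : c.getLast hne = c.get ⟨n - 1, by omega⟩ := by
    rw [List.getLast_eq_getElem, List.get_eq_getElem]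
  have hcv : v0 = (v0 + n) % N := by
    have h3 := congrArg Fin.val hclose
    rw [hhead, hlast, tgt_val, hsrc (n-1) (by omega), Nat.mod_add_mod] at h3
    have h4 : v0 + (n - 1) + 1 = v0 + n := by omega
    rw [h4] at h3
    exact h3
  have hnN : n = N := by
    rw [mod_small hN (by omega)] at hcv
    split at hcv <;> omega
  -- the unique index whose source is vertex 0
  set i0 : ℕ := if v0 = 0 then 0 else N - v0 with hi0
  have hi0lt : i0 < n := by rw [hnN]; dsimp [i0]; split <;> omega
  have hsrc_i0 : (src N K hN (c.get ⟨i0, hi0lt⟩) : ℕ) = 0 := by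
    rw [hsrc i0 hi0lt]
    dsimp [i0]; split
    · rw [mod_small hN (by omega)]; split <;> omega
    · rw [mod_small hN (by omega)]; split <;> omega
  have hsrc_ne : ∀ (i : ℕ) (hi : i < n), i ≠ i0 →
      (src N K hN (c.get ⟨i, hi⟩) : ℕ) ≠ 0 := by
    intro i hi hne'
    rw [hsrc i hi, mod_small hN (by omega)]
    dsimp [i0] at hne'
    split at hne' <;> (split <;> omega)
  -- the chosen edge index is < K
  have hK0 : (↑(c.get ⟨i0, hi0lt⟩) : ℕ) < K :=
    (src_eq_zero_iff hN _).mp hsrc_i0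
  refine ⟨⟨↑(c.get ⟨i0, hi0lt⟩), hK0⟩, hnN, ?_⟩
  -- sum computation
  have hc' : c.map (disp N K zv) = List.ofFn (fun i : Fin n => disp N K zv (c.get i)) := by
    conv_lhs => rw [← List.ofFn_get c]
    rw [List.map_ofFn]
    rfl
  rw [hc', List.sum_ofFn]
  rw [Finset.sum_eq_single (⟨i0, hi0lt⟩ : Fin n)]
  · simp only [disp, dif_pos hK0]
  · intro b _ hb
    apply disp_eq_zero
    rw [← src_eq_zero_iff hN]
    exact hsrc_ne b b.isLt (fun h => hb (Fin.ext h))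
  · intro h; exact absurd (Finset.mem_univ _) h

end Stmt15Aux

namespace Stmt15Aux

lemma get_ofFn' {α : Type*} {n : ℕ} (f : Fin n → α) (i : ℕ)
    (hi : i < (List.ofFn f).length) :
    (List.ofFn f).get ⟨i, hi⟩ = f ⟨i, by simpa using hi⟩ := by
  rw [List.get_ofFn]
  congr 1

lemma cycle_exists {d N K : ℕ} (hN : 0 < N) (zv : Fin K → Fin d → ℤ) (j0 : Fin K) :
    ∃ c : List (Fin (K + (N - 1))),
      (∃ h : c ≠ [], c.Chain' (fun e f => tgt N K hN e = src N K hN f) ∧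
        src N K hN (c.head h) = tgt N K hN (c.getLast h) ∧
        (c.map (src N K hN)).Nodup) ∧
      c.length = N ∧ (c.map (disp N K zv)).sum = zv j0 := by
  set c : List (Fin (K + (N - 1))) :=
    List.ofFn (fun i : Fin N => edgeFrom N K j0 (i : ℕ) i.isLt) with hc
  have hlen : c.length = N := by simp [hc]
  have hne : c ≠ [] := by
    intro h; rw [h] at hlen; simp at hlen; omega
  have h0 : 0 < c.length := List.length_pos_iff.mpr hne
  have hsrcget : ∀ (i : ℕ) (hi : i < c.length),
      (src N K hN (c.get ⟨i, hi⟩) : ℕ) = i := by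
    intro i hi
    show (src N K hN ((List.ofFn (fun k : Fin N => edgeFrom N K j0 (k : ℕ) k.isLt)).get
      ⟨i, hi⟩) : ℕ) = i
    rw [get_ofFn', src_edgeFrom]
  refine ⟨c, ⟨hne, ?_, ?_, ?_⟩, hlen, ?_⟩
  · refine List.isChain_iff_getElem.mpr ?_
    intro i hlt
    show tgt N K hN (c.get ⟨i, by omega⟩) = src N K hN (c.get ⟨i + 1, hlt⟩)
    apply Fin.val_injective
    rw [tgt_val, hsrcget i (by omega), hsrcget (i+1) (by omega)]
    exact Nat.mod_eq_of_lt (by omega)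
  · have hhead : c.head hne = c.get ⟨0, h0⟩ := by
      rw [List.head_eq_getElem, List.get_eq_getElem]
    have hlast : c.getLast hne = c.get ⟨c.length - 1, by omega⟩ := by
      rw [List.getLast_eq_getElem, List.get_eq_getElem]
    rw [hhead, hlast]
    apply Fin.val_injective
    rw [hsrcget 0 h0, tgt_val, hsrcget (c.length - 1) (by omega)]
    have : c.length - 1 + 1 = N := by omega
    rw [this, Nat.mod_self]
  · rw [List.nodup_iff_injective_get]
    intro a b hab
    apply Fin.ext
    have hla : (a : ℕ) < c.length := by simpa using a.isLt
    have hlb : (b : ℕ) < c.length := by simpa using b.isLt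
    have e1 : (c.map (src N K hN)).get a = src N K hN (c.get ⟨a, hla⟩) := by
      simp [List.getElem_map]
    have e2 : (c.map (src N K hN)).get b = src N K hN (c.get ⟨b, hlb⟩) := by
      simp [List.getElem_map]
    rw [e1, e2] at hab
    have := congrArg Fin.val hab
    rwa [hsrcget _ hla, hsrcget _ hlb] at this
  · have hc' : c.map (disp N K zv)
        = List.ofFn (fun i : Fin N => disp N K zv (edgeFrom N K j0 (i : ℕ) i.isLt)) := by
      rw [hc, List.map_ofFn]
      rfl
    rw [hc', List.sum_ofFn]
    have : ∀ i : Fin N, disp N K zv (edgeFrom N K j0 (i : ℕ) i.isLt)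
        = if (i : ℕ) = 0 then zv j0 else 0 := fun i => disp_edgeFrom zv j0 i i.isLt
    rw [Finset.sum_congr rfl (fun i _ => this i)]
    rw [Finset.sum_eq_single (⟨0, hN⟩ : Fin N)]
    · simp
    · intro b _ hb
      rw [if_neg (fun h => hb (Fin.ext h))]
    · intro h; exact absurd (Finset.mem_univ _) h

lemma connected {d : ℕ} (N K : ℕ) (hN : 0 < N) (hK : 0 < K) :
    ∀ v w : Fin N, ∃ p : List (Fin (K + (N - 1))),
      ∃ h : p ≠ [], p.Chain' (fun e f => tgt N K hN e = src N K hN f) ∧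
        src N K hN (p.head h) = v ∧ tgt N K hN (p.getLast h) = w := by
  intro v w
  set j0 : Fin K := ⟨0, hK⟩
  set L : ℕ := if (v : ℕ) < (w : ℕ) then (w : ℕ) - v else N + w - v with hL
  have hL1 : 1 ≤ L ∧ L ≤ N := by
    have := v.isLt; have := w.isLt
    dsimp [L]; split <;> omega
  set p : List (Fin (K + (N - 1))) :=
    List.ofFn (fun i : Fin L => edgeFrom N K j0 (((v : ℕ) + i) % N) (Nat.mod_lt _ hN))
    with hp
  have hlen : p.length = L := by simp [hp]
  have hne : p ≠ [] := by
    intro h; rw [h] at hlen; simp at hlen; omega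
  have h0 : 0 < p.length := List.length_pos_iff.mpr hne
  have hget : ∀ (i : ℕ) (hi : i < p.length),
      (src N K hN (p.get ⟨i, hi⟩) : ℕ) = ((v : ℕ) + i) % N := by
    intro i hi
    show (src N K hN ((List.ofFn (fun k : Fin L =>
      edgeFrom N K j0 (((v : ℕ) + k) % N) (Nat.mod_lt _ hN))).get ⟨i, hi⟩) : ℕ)
      = ((v : ℕ) + i) % N
    rw [get_ofFn', src_edgeFrom]
  refine ⟨p, hne, ?_, ?_, ?_⟩
  · refine List.isChain_iff_getElem.mpr ?_
    intro i hlt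
    show tgt N K hN (p.get ⟨i, by omega⟩) = src N K hN (p.get ⟨i + 1, hlt⟩)
    apply Fin.val_injective
    rw [tgt_val, hget i (by omega), hget (i+1) (by omega), Nat.mod_add_mod,
      Nat.add_assoc]
  · apply Fin.val_injective
    have hhead : p.head hne = p.get ⟨0, h0⟩ := by
      rw [List.head_eq_getElem, List.get_eq_getElem]
    rw [hhead, hget 0 h0, Nat.add_zero, Nat.mod_eq_of_lt v.isLt]
  · apply Fin.val_injective
    have hlast : p.getLast hne = p.get ⟨p.length - 1, by omega⟩ := by
      rw [List.getLast_eq_getElem, List.get_eq_getElem]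
    rw [hlast, tgt_val, hget (p.length - 1) (by omega), Nat.mod_add_mod]
    have hstep : (v : ℕ) + (p.length - 1) + 1 = (v : ℕ) + L := by omega
    rw [hstep]
    have := v.isLt; have := w.isLt
    dsimp [L]
    split
    · rw [Nat.mod_eq_of_lt (by omega)]; omega
    · have h2 : (v : ℕ) + (N + (w : ℕ) - v) = N + w := by omega
      rw [h2, Nat.add_mod_left, Nat.mod_eq_of_lt w.isLt]

end Stmt15Aux

namespace Stmt15Aux

lemma zv_spec {N : ℕ} (q : ℚ) (hdvd : (q.den : ℤ) ∣ (N : ℤ)) :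
    (((N : ℤ) * q.num / (q.den : ℤ) : ℤ) : ℚ) = (N : ℚ) * q := by
  have hdd : (q.den : ℤ) ∣ (N : ℤ) * q.num := Dvd.dvd.mul_right hdvd _
  have key : ((N : ℤ) * q.num / (q.den : ℤ)) * (q.den : ℤ) = (N : ℤ) * q.num :=
    Int.ediv_mul_cancel hdd
  have key2 := congrArg (fun z : ℤ => (z : ℚ)) key
  push_cast at key2
  have hden : ((q.den : ℚ)) ≠ 0 := by exact_mod_cast q.den_ne_zero
  apply mul_right_cancel₀ hden
  rw [key2, mul_assoc, Rat.mul_den_eq_num]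

end Stmt15Aux

/-- Every rational polytope is a velocity polytope: for every nonempty finite
set `W ⊆ ℚ^d` there is a strongly connected displacement graph in dimension `d`
whose velocity polytope equals the convex hull of `W`. -/
theorem stmt15 {d : ℕ} (hd : 1 ≤ d)
    (W : Set (Fin d → ℚ)) (hWfin : W.Finite) (hWne : W.Nonempty) :
    ∃ (n m : ℕ) (_ : 0 < n) (s t : Fin m → Fin n) (δ : Fin m → Fin d → ℤ),
      StronglyConnected s t ∧
      convexHull ℝ (basicVelocities s t δ) = convexHull ℝ (toRQ '' W) := by
  classical
  set F := hWfin.toFinset with hF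
  set K := F.card with hKdef
  have hK : 0 < K := Finset.card_pos.mpr (by simpa [hF] using hWne)
  set eW := F.equivFin with heW
  set wv : Fin K → (Fin d → ℚ) := fun j => ((eW.symm j : {x // x ∈ F}) : Fin d → ℚ)
    with hwv
  have hwvmem : ∀ j, wv j ∈ W := fun j => (hWfin.mem_toFinset).mp (eW.symm j).2
  have hwvsurj : ∀ x ∈ W, ∃ j, wv j = x := by
    intro x hx
    exact ⟨eW ⟨x, hWfin.mem_toFinset.mpr hx⟩, by simp [hwv]⟩
  set N : ℕ := ∏ x ∈ F, ∏ i, (x i).den with hNdef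
  have hN : 0 < N :=
    Finset.prod_pos (fun x _ => Finset.prod_pos (fun i _ => (x i).pos))
  have hdvd : ∀ (j : Fin K) (i : Fin d), ((wv j i).den : ℤ) ∣ (N : ℤ) := by
    intro j i
    have h0 : (wv j i).den ∣ ∏ i', (wv j i').den :=
      Finset.dvd_prod_of_mem (fun i' => (wv j i').den) (Finset.mem_univ i)
    have h2 : (∏ i', (wv j i').den) ∣ N := by
      rw [hNdef]
      exact Finset.dvd_prod_of_mem (fun x => ∏ i, (x i).den)
        (hWfin.mem_toFinset.mpr (hwvmem j))
    exact Int.natCast_dvd_natCast.mpr (dvd_trans h0 h2)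
  set zv : Fin K → Fin d → ℤ := fun j i => (N : ℤ) * (wv j i).num / ((wv j i).den : ℤ)
    with hzv
  have hz : ∀ j i, ((zv j i : ℤ) : ℚ) = (N : ℚ) * wv j i := fun j i =>
    Stmt15Aux.zv_spec (wv j i) (hdvd j i)
  have hvel : ∀ j : Fin K, ((N : ℝ))⁻¹ • toR (zv j) = toRQ (wv j) := by
    intro j
    ext i
    have h1 : ((zv j i : ℤ) : ℝ) = (N : ℝ) * ((wv j i : ℚ) : ℝ) := by
      have := congrArg (fun q : ℚ => (q : ℝ)) (hz j i)
      push_cast at this ⊢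
      exact this
    have hNne : (N : ℝ) ≠ 0 := by positivity
    show (N : ℝ)⁻¹ * ((zv j i : ℤ) : ℝ) = ((wv j i : ℚ) : ℝ)
    rw [h1]
    field_simp
  refine ⟨N, K + (N - 1), hN, Stmt15Aux.src N K hN, Stmt15Aux.tgt N K hN,
    Stmt15Aux.disp N K zv, ?_, ?_⟩
  · intro v w
    obtain ⟨p, h⟩ := Stmt15Aux.connected (d := d) N K hN hK v w
    exact ⟨p, h⟩
  · have hset : basicVelocities (Stmt15Aux.src N K hN) (Stmt15Aux.tgt N K hN)
        (Stmt15Aux.disp N K zv) = toRQ '' W := by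
      ext u
      constructor
      · rintro ⟨c, hc, rfl⟩
        obtain ⟨j0, hlen, hsum⟩ := Stmt15Aux.cycle_structure hN zv hc
        refine ⟨wv j0, hwvmem j0, ?_⟩
        rw [hlen, hsum]
        exact (hvel j0).symm
      · rintro ⟨x, hx, rfl⟩
        obtain ⟨j, rfl⟩ := hwvsurj x hx
        obtain ⟨c, hcyc, hlen, hsum⟩ := Stmt15Aux.cycle_exists hN zv j
        refine ⟨c, hcyc, ?_⟩
        rw [hlen, hsum]
        exact (hvel j).symm
    rw [hset]
end
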